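/- arXiv:1205.4172 — 4 statements merged into one kernel-verified Lean document; each statement's English description precedes it below -/
import Mathlib

section
/- Let γ ∈ (0,2] and let (n_k)_{k≥0} be a nondecreasing sequence of positive integers with n_k → ∞ and sup_k n_{k+1}/n_k < ∞. Then the following are equivalent: (1) V(n_k)/n_k^γ → 0 as k → ∞; (2) G(x)/x^{2−γ} → 0 as x → 0⁺; (3) V(n)/n^γ → 0 as n → ∞. -/
open MeasureTheory Filter Set Topology

/-- Fejér-type kernel: `I_n(y) = sin²(ny/2)/sin²(y/2)` for `y ≠ 0`, `I_n(0) = n²`. -/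
noncomputable def fejerKernel (n : ℕ) (y : ℝ) : ℝ :=
  if y = 0 then (n : ℝ) ^ 2 else Real.sin (n * y / 2) ^ 2 / Real.sin (y / 2) ^ 2

/-- Variance functional `V(n) = ∫_{[0,π]} I_n(y) dμ(y)`. -/
noncomputable def varV (μ : Measure ℝ) (n : ℕ) : ℝ :=
  ∫ y in Icc 0 Real.pi, fejerKernel n y ∂μ

/-- `G(x) = μ([0,x])` for a measure `μ` on `[0,π]`. -/
noncomputable def specG (μ : Measure ℝ) (x : ℝ) : ℝ :=
  (μ (Icc 0 x)).toReal

/-- A function `L : (0,∞) → (0,∞)` is slowly varying at infinity if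
`L(λx)/L(x) → 1` as `x → ∞` for every `λ > 0`. -/
def SlowlyVarying (L : ℝ → ℝ) : Prop :=
  ∀ lam : ℝ, 0 < lam → Tendsto (fun x => L (lam * x) / L x) atTop (𝓝 1)

set_option linter.unusedSectionVars false


lemma abs_sin_nat_mul_le' (n : ℕ) (x : ℝ) : |Real.sin (n * x)| ≤ n * |Real.sin x| := by
  induction n with
  | zero => simp
  | succ n ih =>
    have h : ((n : ℝ) + 1) * x = n * x + x := by ring
    push_cast
    rw [h, Real.sin_add]
    calc |Real.sin (n*x) * Real.cos x + Real.cos (n*x) * Real.sin x|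
        ≤ |Real.sin (n*x) * Real.cos x| + |Real.cos (n*x) * Real.sin x| := abs_add_le _ _
      _ ≤ |Real.sin (n*x)| * 1 + 1 * |Real.sin x| := by
          rw [abs_mul, abs_mul]
          gcongr
          · exact Real.abs_cos_le_one x
          · exact Real.abs_cos_le_one _
      _ ≤ (n : ℝ) * |Real.sin x| + |Real.sin x| := by
          rw [mul_one, one_mul]; gcongr
      _ = ((n : ℝ) + 1) * |Real.sin x| := by ring

lemma fejerKernel_nonneg (n : ℕ) (y : ℝ) : 0 ≤ fejerKernel n y := by
  unfold fejerKernel; split <;> positivity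

lemma fejerKernel_le_sq (n : ℕ) (y : ℝ) : fejerKernel n y ≤ (n : ℝ) ^ 2 := by
  unfold fejerKernel
  split
  · exact le_rfl
  · by_cases hs : Real.sin (y / 2) = 0
    · rcases Real.sin_eq_zero_iff.1 hs with ⟨k, hk⟩
      have : Real.sin (n * y / 2) = 0 := by
        have h2 : (n : ℝ) * y / 2 = (n * k : ℤ) * Real.pi := by
          push_cast
          rw [mul_comm ((k:ℝ)) Real.pi] at hk
          nlinarith [hk]
        rw [h2, Real.sin_int_mul_pi]
      rw [this, hs]
      norm_num
    · have h2 : Real.sin (n * y / 2) ^ 2 ≤ (n : ℝ) ^ 2 * Real.sin (y / 2) ^ 2 := by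
        have := abs_sin_nat_mul_le' n (y / 2)
        have h' : ((n : ℝ) * (y/2)) = n * y / 2 := by ring
        rw [h'] at this
        calc Real.sin (n * y / 2) ^ 2 = |Real.sin (n * y / 2)| ^ 2 := (sq_abs _).symm
          _ ≤ ((n : ℝ) * |Real.sin (y/2)|) ^ 2 := by
              apply pow_le_pow_left₀ (abs_nonneg _) this
          _ = (n : ℝ) ^ 2 * Real.sin (y/2) ^ 2 := by rw [mul_pow, sq_abs]
      rw [div_le_iff₀ ((sq_nonneg _).lt_of_ne' (pow_ne_zero 2 hs))]
      exact h2

lemma fejerKernel_le_div_sq (n : ℕ) {y : ℝ} (hy : 0 < y) (hy' : y ≤ Real.pi) :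
    fejerKernel n y ≤ Real.pi ^ 2 / y ^ 2 := by
  unfold fejerKernel
  rw [if_neg hy.ne']
  have hsin : y / Real.pi ≤ Real.sin (y / 2) := by
    have := Real.mul_le_sin (x := y / 2) (by positivity) (by linarith)
    calc y / Real.pi = 2 / Real.pi * (y / 2) := by field_simp
      _ ≤ Real.sin (y / 2) := this
  have hpos : (0:ℝ) < y / Real.pi := by positivity
  have hsq : (y / Real.pi) ^ 2 ≤ Real.sin (y / 2) ^ 2 :=
    pow_le_pow_left₀ hpos.le hsin 2
  calc Real.sin (n * y / 2) ^ 2 / Real.sin (y / 2) ^ 2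
      ≤ 1 / (y / Real.pi) ^ 2 := by
        apply div_le_div₀ (by norm_num) (Real.sin_sq_le_one _) (by positivity) hsq
    _ = Real.pi ^ 2 / y ^ 2 := by
        rw [div_pow]; rw [one_div_div]

lemma le_fejerKernel (n : ℕ) (hn : 1 ≤ n) {y : ℝ}
    (hy : y ∈ Icc 0 (Real.pi / n)) :
    4 / Real.pi ^ 2 * (n : ℝ) ^ 2 ≤ fejerKernel n y := by
  have hπ := Real.pi_gt_three
  obtain ⟨hy0, hyn⟩ := hy
  have hn' : (1:ℝ) ≤ (n:ℝ) := by exact_mod_cast hn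
  rcases eq_or_lt_of_le hy0 with h0 | h0
  · rw [fejerKernel, if_pos h0.symm]
    have h4 : 4 / Real.pi ^ 2 ≤ 1 := by
      rw [div_le_one (by positivity)]; nlinarith
    nlinarith [sq_nonneg ((n:ℝ))]
  · rw [fejerKernel, if_neg h0.ne']
    have hyπ : y ≤ Real.pi := le_trans hyn (by
      rw [div_le_iff₀ (by positivity)]
      nlinarith)
    -- sin (n*y/2) ≥ n*y/π
    have harg : (n:ℝ) * y / 2 ≤ Real.pi / 2 := by
      rw [div_le_div_iff_of_pos_right (by norm_num)] at *
      calc (n:ℝ) * y ≤ (n:ℝ) * (Real.pi / n) := by nlinarith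
        _ = Real.pi := by field_simp
    have hsin1 : (n:ℝ) * y / Real.pi ≤ Real.sin ((n:ℝ) * y / 2) := by
      have := Real.mul_le_sin (x := (n:ℝ) * y / 2) (by positivity) harg
      calc (n:ℝ) * y / Real.pi = 2 / Real.pi * ((n:ℝ) * y / 2) := by field_simp
        _ ≤ _ := this
    have hsin2 : Real.sin (y / 2) ≤ y / 2 := Real.sin_le (by positivity)
    have hsinpos : 0 < Real.sin (y / 2) :=
      Real.sin_pos_of_pos_of_lt_pi (by positivity) (by nlinarith)
    calc 4 / Real.pi ^ 2 * (n : ℝ) ^ 2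
        = ((n:ℝ) * y / Real.pi) ^ 2 / ((y / 2) ^ 2) := by
          field_simp
          ring
      _ ≤ Real.sin ((n:ℝ) * y / 2) ^ 2 / Real.sin (y / 2) ^ 2 := by
          apply div_le_div₀ (sq_nonneg _)
            (pow_le_pow_left₀ (by positivity) hsin1 2)
            (by positivity)
            (pow_le_pow_left₀ hsinpos.le hsin2 2)

lemma fejerKernel_measurable (n : ℕ) : Measurable (fejerKernel n) := by
  unfold fejerKernel
  apply Measurable.ite (measurableSet_eq) measurable_const
  apply Measurable.div
  · exact ((Real.measurable_sin.comp ((measurable_id.const_mul _).div_const 2)).pow_const 2)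
  · exact ((Real.measurable_sin.comp (measurable_id.div_const 2)).pow_const 2)


section Lemmas
variable (μ : Measure ℝ) [IsFiniteMeasure μ]

lemma fejer_integrableOn (n : ℕ) (s : Set ℝ) : IntegrableOn (fejerKernel n) s μ := by
  apply Integrable.mono' (integrable_const ((n:ℝ)^2)) ((fejerKernel_measurable n).aestronglyMeasurable)
  apply Eventually.of_forall
  intro y
  rw [Real.norm_eq_abs, abs_of_nonneg (fejerKernel_nonneg n y)]
  exact fejerKernel_le_sq n y

lemma varV_nonneg (n : ℕ) : 0 ≤ varV μ n :=
  integral_nonneg fun y => fejerKernel_nonneg n y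

lemma varV_lower (n : ℕ) (hn : 1 ≤ n) :
    4 / Real.pi ^ 2 * (n : ℝ) ^ 2 * specG μ (Real.pi / n) ≤ varV μ n := by
  have hsub : Icc (0:ℝ) (Real.pi / n) ⊆ Icc 0 Real.pi := by
    apply Icc_subset_Icc le_rfl
    rw [div_le_iff₀ (by exact_mod_cast hn.trans_lt (lt_add_one n) |> fun _ => (by positivity : (0:ℝ) < n))]
    nlinarith [Real.pi_pos, (by exact_mod_cast hn : (1:ℝ) ≤ (n:ℝ))]
  calc 4 / Real.pi ^ 2 * (n : ℝ) ^ 2 * specG μ (Real.pi / n)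
      ≤ ∫ y in Icc 0 (Real.pi / n), fejerKernel n y ∂μ := by
        have h := setIntegral_ge_of_const_le measurableSet_Icc (measure_ne_top μ _)
          (fun x hx => le_fejerKernel n hn hx) (fejer_integrableOn μ n _)
        rw [smul_eq_mul, mul_comm] at h; exact h
    _ ≤ varV μ n := by
        apply setIntegral_mono_set (fejer_integrableOn μ n _)
          (Eventually.of_forall fun y => fejerKernel_nonneg n y)
          (HasSubset.Subset.eventuallyLE hsub)

lemma varV_eq_lintegral (n : ℕ) :
    varV μ n = (∫⁻ y in Icc 0 Real.pi, ENNReal.ofReal (fejerKernel n y) ∂μ).toReal := by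
  apply integral_eq_lintegral_of_nonneg_ae
    (Eventually.of_forall fun y => fejerKernel_nonneg n y)
    ((fejerKernel_measurable n).aestronglyMeasurable)

end Lemmas

section Upper
variable (μ : Measure ℝ) [IsFiniteMeasure μ]

lemma piece_bound (n : ℕ) (s : Set ℝ) (c : ℝ) (hc : ∀ y ∈ s, fejerKernel n y ≤ c) :
    ∫⁻ y in s, ENNReal.ofReal (fejerKernel n y) ∂μ ≤ ENNReal.ofReal c * μ s := by
  calc ∫⁻ y in s, ENNReal.ofReal (fejerKernel n y) ∂μ
      ≤ ∫⁻ _ in s, ENNReal.ofReal c ∂μ :=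
        setLIntegral_mono measurable_const fun x hx => ENNReal.ofReal_le_ofReal (hc x hx)
    _ = ENNReal.ofReal c * μ s := setLIntegral_const s _

lemma measure_Icc_le_ofReal (x b : ℝ) (hx : (μ (Icc 0 x)).toReal ≤ b) :
    μ (Icc 0 x) ≤ ENNReal.ofReal b := by
  rw [← ENNReal.ofReal_toReal (measure_ne_top μ _)]
  exact ENNReal.ofReal_le_ofReal hx

lemma varV_upper {γ ε δ : ℝ} (hγ0 : 0 < γ) (hγ2 : γ ≤ 2) (hε : 0 < ε) (hδ : 0 < δ)
    (hδπ : δ ≤ Real.pi)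
    (hG : ∀ x : ℝ, 0 < x → x ≤ δ → specG μ x ≤ ε * x ^ (2 - γ))
    (n : ℕ) (hn : 1 ≤ n) (hnδ : 1 / (n : ℝ) ≤ δ) :
    varV μ n ≤ ε * (1 + Real.pi ^ 2 * (2:ℝ) ^ (2 - γ) * (1 - (2:ℝ) ^ (-γ))⁻¹) * (n : ℝ) ^ γ
      + Real.pi ^ 2 / δ ^ 2 * (μ univ).toReal := by
  have hπ := Real.pi_pos
  have hnR : (0:ℝ) < (n:ℝ) := by exact_mod_cast hn
  set r : ℝ := (2:ℝ) ^ (-γ) with hr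
  have hr0 : 0 ≤ r := Real.rpow_nonneg (by norm_num) _
  have hr1 : r < 1 := Real.rpow_lt_one_of_one_lt_of_neg (by norm_num) (by linarith)
  have hrinv : 0 < (1 - r)⁻¹ := by
    apply inv_pos.2; linarith
  set A : ℕ → Set ℝ := fun j => Ico ((2:ℝ)^j / n) ((2:ℝ)^(j+1) / n) ∩ Icc 0 δ with hA
  -- the covering
  have hcov : Icc (0:ℝ) Real.pi ⊆ (Icc 0 (1/(n:ℝ)) ∪ ⋃ j, A j) ∪ Ioc δ Real.pi := by
    intro y hy
    obtain ⟨hy0, hyπ⟩ := hy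
    by_cases hyδ : y ≤ δ
    swap
    · exact Or.inr ⟨lt_of_not_ge hyδ, hyπ⟩
    by_cases hy1 : y ≤ 1 / (n:ℝ)
    · exact Or.inl (Or.inl ⟨hy0, hy1⟩)
    · push_neg at hy1
      have hny : 1 < (n:ℝ) * y := by
        rw [one_div] at hy1
        calc (1:ℝ) = (n:ℝ) * (n:ℝ)⁻¹ := by field_simp
          _ < (n:ℝ) * y := by gcongr
      set m : ℕ := ⌊(n:ℝ) * y⌋₊ with hm
      have hm1 : 1 ≤ m := Nat.le_floor (by exact_mod_cast hny.le)
      set j : ℕ := Nat.log 2 m with hj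
      have hlow : ((2:ℝ))^j ≤ (n:ℝ) * y := by
        calc ((2:ℝ))^j = ((2^j : ℕ) : ℝ) := by push_cast; ring
          _ ≤ (m : ℝ) := by exact_mod_cast Nat.pow_log_le_self 2 (by omega)
          _ ≤ (n:ℝ) * y := Nat.floor_le (by positivity)
      have hhigh : (n:ℝ) * y < ((2:ℝ))^(j+1) := by
        have h1 : m < 2^(j+1) := Nat.lt_pow_succ_log_self (by norm_num) m
        calc (n:ℝ) * y < (m : ℝ) + 1 := Nat.lt_floor_add_one _
          _ ≤ ((2^(j+1) : ℕ) : ℝ) := by exact_mod_cast h1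
          _ = ((2:ℝ))^(j+1) := by push_cast; ring
      refine Or.inl (Or.inr (mem_iUnion.2 ⟨j, ⟨⟨?_, ?_⟩, hy0, hyδ⟩⟩))
      · rw [div_le_iff₀ hnR]; linarith [hlow]
      · rw [lt_div_iff₀ hnR]; linarith [hhigh]
  -- small piece
  have hP0 : ∫⁻ y in Icc 0 (1/(n:ℝ)), ENNReal.ofReal (fejerKernel n y) ∂μ
      ≤ ENNReal.ofReal (ε * (n:ℝ) ^ γ) := by
    have hkey : (n:ℝ) ^ (2:ℕ) * (ε * (1/(n:ℝ)) ^ (2 - γ)) = ε * (n:ℝ) ^ γ := by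
      have e : (1/(n:ℝ)) ^ (2 - γ) = (n:ℝ) ^ (γ - 2) := by
        rw [one_div, ← Real.rpow_neg_one (n:ℝ), ← Real.rpow_mul hnR.le]
        congr 1
        ring
      rw [e, ← Real.rpow_natCast (n:ℝ) 2, mul_left_comm, ← Real.rpow_add hnR]
      norm_num
    calc ∫⁻ y in Icc 0 (1/(n:ℝ)), ENNReal.ofReal (fejerKernel n y) ∂μ
        ≤ ENNReal.ofReal ((n:ℝ)^2) * μ (Icc 0 (1/(n:ℝ))) :=
          piece_bound μ n _ _ (fun y _ => fejerKernel_le_sq n y)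
      _ ≤ ENNReal.ofReal ((n:ℝ)^2) * ENNReal.ofReal (ε * (1/(n:ℝ)) ^ (2 - γ)) := by
          gcongr
          exact measure_Icc_le_ofReal μ _ _ (hG _ (by positivity) hnδ)
      _ = ENNReal.ofReal ((n:ℝ)^2 * (ε * (1/(n:ℝ)) ^ (2 - γ))) := by
          rw [← ENNReal.ofReal_mul (by positivity)]
      _ = ENNReal.ofReal (ε * (n:ℝ) ^ γ) := by rw [← hkey]
  -- annuli pieces
  have hPj : ∀ j : ℕ, ∫⁻ y in A j, ENNReal.ofReal (fejerKernel n y) ∂μ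
      ≤ ENNReal.ofReal (ε * Real.pi^2 * (2:ℝ)^(2-γ) * (n:ℝ)^γ * r^j) := by
    intro j
    have ha : (0:ℝ) < (2:ℝ)^j / n := by positivity
    have hbound : ∀ y ∈ A j, fejerKernel n y ≤ Real.pi^2 / ((2:ℝ)^j / n)^2 := by
      intro y hy
      obtain ⟨⟨hy1, hy2⟩, hy0, hyδ⟩ := hy
      have hypos : 0 < y := lt_of_lt_of_le ha hy1
      refine (fejerKernel_le_div_sq n hypos (le_trans hyδ hδπ)).trans ?_
      exact div_le_div_of_nonneg_left (by positivity) (by positivity)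
        (pow_le_pow_left₀ ha.le hy1 2)
    have hmeas : μ (A j) ≤ ENNReal.ofReal (ε * ((2:ℝ)^(j+1)/n) ^ (2-γ)) := by
      have hx0 : (0:ℝ) < min ((2:ℝ)^(j+1)/n) δ := lt_min (by positivity) hδ
      have hsub : A j ⊆ Icc 0 (min ((2:ℝ)^(j+1)/n) δ) := by
        rintro y ⟨⟨hy1, hy2⟩, hy0, hyδ⟩
        exact ⟨hy0, le_min hy2.le hyδ⟩
      calc μ (A j) ≤ μ (Icc 0 (min ((2:ℝ)^(j+1)/n) δ)) := measure_mono hsub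
        _ ≤ ENNReal.ofReal (ε * (min ((2:ℝ)^(j+1)/n) δ) ^ (2-γ)) :=
            measure_Icc_le_ofReal μ _ _ (hG _ hx0 (min_le_right _ _))
        _ ≤ _ := by
            apply ENNReal.ofReal_le_ofReal
            exact mul_le_mul_of_nonneg_left
              (Real.rpow_le_rpow hx0.le (min_le_left _ _) (by linarith)) hε.le
    have hkey : Real.pi^2 / ((2:ℝ)^j / n)^2 * (ε * ((2:ℝ)^(j+1)/n) ^ (2-γ))
        = ε * Real.pi^2 * (2:ℝ)^(2-γ) * (n:ℝ)^γ * r^j := by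
      have h20 : (0:ℝ) ≤ 2 := by norm_num
      have E1 : ((2:ℝ)^(j+1) / n) ^ (2-γ)
          = (2:ℝ)^(((j:ℝ)+1)*(2-γ)) * ((n:ℝ)^((2:ℝ)-γ))⁻¹ := by
        rw [Real.div_rpow (by positivity) hnR.le, ← Real.rpow_natCast (2:ℝ) (j+1),
          ← Real.rpow_mul h20, div_eq_mul_inv]
        push_cast
        ring_nf
      have E2 : ((2:ℝ)^j / n) ^ (2:ℕ) = (2:ℝ)^((j:ℝ)*2) * ((n:ℝ)^((2:ℝ)))⁻¹ := by
        rw [div_pow, ← Real.rpow_natCast (2:ℝ) j,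
          ← Real.rpow_natCast ((2:ℝ)^((j:ℝ))) 2, ← Real.rpow_mul h20,
          ← Real.rpow_natCast (n:ℝ) 2, div_eq_mul_inv]
        norm_num
      have E3 : (n:ℝ)^(2:ℝ) = (n:ℝ)^γ * (n:ℝ)^((2:ℝ)-γ) := by
        rw [← Real.rpow_add hnR]; ring_nf
      have E4 : r ^ j = (2:ℝ)^(-(γ*(j:ℝ))) := by
        rw [hr, ← Real.rpow_natCast ((2:ℝ)^(-γ)) j, ← Real.rpow_mul h20]
        ring_nf
      have E5 : (2:ℝ)^(((j:ℝ)+1)*(2-γ))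
          = (2:ℝ)^(2-γ) * ((2:ℝ)^((j:ℝ)*2) * (2:ℝ)^(-(γ*(j:ℝ)))) := by
        rw [← Real.rpow_add (by norm_num : (0:ℝ) < 2),
          ← Real.rpow_add (by norm_num : (0:ℝ) < 2)]
        ring_nf
      have hn2 : ((n:ℝ)^((2:ℝ)-γ)) ≠ 0 := by positivity
      have hn3 : ((n:ℝ)^(γ:ℝ)) ≠ 0 := by positivity
      have h2a : ((2:ℝ)^((j:ℝ)*2)) ≠ 0 := by positivity
      rw [E1, E2, E3, E4, E5]
      field_simp
    calc ∫⁻ y in A j, ENNReal.ofReal (fejerKernel n y) ∂μ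
        ≤ ENNReal.ofReal (Real.pi^2 / ((2:ℝ)^j / n)^2) * μ (A j) :=
          piece_bound μ n _ _ hbound
      _ ≤ ENNReal.ofReal (Real.pi^2 / ((2:ℝ)^j / n)^2)
            * ENNReal.ofReal (ε * ((2:ℝ)^(j+1)/n) ^ (2-γ)) := by gcongr
      _ = ENNReal.ofReal (Real.pi^2 / ((2:ℝ)^j / n)^2 * (ε * ((2:ℝ)^(j+1)/n) ^ (2-γ))) := by
          rw [← ENNReal.ofReal_mul (by positivity)]
      _ = ENNReal.ofReal (ε * Real.pi^2 * (2:ℝ)^(2-γ) * (n:ℝ)^γ * r^j) := by rw [hkey]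
  -- sum of annuli
  have hsummable : Summable (fun j : ℕ => ε * Real.pi^2 * (2:ℝ)^(2-γ) * (n:ℝ)^γ * r^j) :=
    (summable_geometric_of_lt_one hr0 hr1).mul_left _
  have hsum : ∑' j, ∫⁻ y in A j, ENNReal.ofReal (fejerKernel n y) ∂μ
      ≤ ENNReal.ofReal (ε * Real.pi^2 * (2:ℝ)^(2-γ) * (n:ℝ)^γ * (1-r)⁻¹) := by
    calc ∑' j, ∫⁻ y in A j, ENNReal.ofReal (fejerKernel n y) ∂μ
        ≤ ∑' j, ENNReal.ofReal (ε * Real.pi^2 * (2:ℝ)^(2-γ) * (n:ℝ)^γ * r^j) :=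
          ENNReal.tsum_le_tsum hPj
      _ = ENNReal.ofReal (∑' j, ε * Real.pi^2 * (2:ℝ)^(2-γ) * (n:ℝ)^γ * r^j) :=
          (ENNReal.ofReal_tsum_of_nonneg (fun j => by positivity) hsummable).symm
      _ = ENNReal.ofReal (ε * Real.pi^2 * (2:ℝ)^(2-γ) * (n:ℝ)^γ * (1-r)⁻¹) := by
          rw [tsum_mul_left, tsum_geometric_of_lt_one hr0 hr1]
  -- tail piece
  have htail : ∫⁻ y in Ioc δ Real.pi, ENNReal.ofReal (fejerKernel n y) ∂μ
      ≤ ENNReal.ofReal (Real.pi^2 / δ^2 * (μ univ).toReal) := by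
    calc ∫⁻ y in Ioc δ Real.pi, ENNReal.ofReal (fejerKernel n y) ∂μ
        ≤ ENNReal.ofReal (Real.pi^2/δ^2) * μ (Ioc δ Real.pi) := by
          apply piece_bound μ n _ _
          intro y hy
          refine (fejerKernel_le_div_sq n (hδ.trans hy.1) hy.2).trans ?_
          exact div_le_div_of_nonneg_left (by positivity) (by positivity)
            (pow_le_pow_left₀ hδ.le hy.1.le 2)
      _ ≤ ENNReal.ofReal (Real.pi^2/δ^2) * μ univ := by
          gcongr
          exact subset_univ _
      _ = ENNReal.ofReal (Real.pi^2 / δ^2 * (μ univ).toReal) := by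
          conv_lhs => rw [← ENNReal.ofReal_toReal (measure_ne_top μ univ)]
          rw [← ENNReal.ofReal_mul (by positivity)]
  -- assemble
  have hC0 : (0:ℝ) ≤ Real.pi^2 * (2:ℝ)^(2-γ) * (1-r)⁻¹ := by positivity
  have hRHS0 : (0:ℝ) ≤ ε * (1 + Real.pi ^ 2 * (2:ℝ) ^ (2 - γ) * (1 - (2:ℝ) ^ (-γ))⁻¹) * (n : ℝ) ^ γ
      + Real.pi ^ 2 / δ ^ 2 * (μ univ).toReal := by
    have h1 : (0:ℝ) ≤ (μ univ).toReal := ENNReal.toReal_nonneg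
    have h2 : (0:ℝ) ≤ (n:ℝ)^γ := Real.rpow_nonneg hnR.le _
    have h3 : (0:ℝ) ≤ Real.pi^2/δ^2 := by positivity
    rw [← hr]
    have h4 : (0:ℝ) ≤ 1 + Real.pi^2 * (2:ℝ)^(2-γ) * (1-r)⁻¹ := by linarith
    nlinarith [mul_nonneg (mul_nonneg hε.le h4) h2, mul_nonneg h3 h1]
  have L : ∫⁻ y in Icc 0 Real.pi, ENNReal.ofReal (fejerKernel n y) ∂μ
      ≤ ENNReal.ofReal (ε * (1 + Real.pi ^ 2 * (2:ℝ) ^ (2 - γ) * (1 - (2:ℝ) ^ (-γ))⁻¹) * (n : ℝ) ^ γ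
        + Real.pi ^ 2 / δ ^ 2 * (μ univ).toReal) := by
    calc ∫⁻ y in Icc 0 Real.pi, ENNReal.ofReal (fejerKernel n y) ∂μ
        ≤ ∫⁻ y in (Icc 0 (1/(n:ℝ)) ∪ ⋃ j, A j) ∪ Ioc δ Real.pi,
            ENNReal.ofReal (fejerKernel n y) ∂μ := lintegral_mono_set hcov
      _ ≤ (∫⁻ y in Icc 0 (1/(n:ℝ)) ∪ ⋃ j, A j, ENNReal.ofReal (fejerKernel n y) ∂μ)
            + ∫⁻ y in Ioc δ Real.pi, ENNReal.ofReal (fejerKernel n y) ∂μ :=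
          lintegral_union_le _ _ _
      _ ≤ ((∫⁻ y in Icc 0 (1/(n:ℝ)), ENNReal.ofReal (fejerKernel n y) ∂μ)
            + ∫⁻ y in ⋃ j, A j, ENNReal.ofReal (fejerKernel n y) ∂μ)
            + ∫⁻ y in Ioc δ Real.pi, ENNReal.ofReal (fejerKernel n y) ∂μ := by
          gcongr
          exact lintegral_union_le _ _ _
      _ ≤ ((∫⁻ y in Icc 0 (1/(n:ℝ)), ENNReal.ofReal (fejerKernel n y) ∂μ)
            + ∑' j, ∫⁻ y in A j, ENNReal.ofReal (fejerKernel n y) ∂μ)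
            + ∫⁻ y in Ioc δ Real.pi, ENNReal.ofReal (fejerKernel n y) ∂μ := by
          gcongr
          exact lintegral_iUnion_le _ _
      _ ≤ (ENNReal.ofReal (ε * (n:ℝ)^γ)
            + ENNReal.ofReal (ε * Real.pi^2 * (2:ℝ)^(2-γ) * (n:ℝ)^γ * (1-r)⁻¹))
            + ENNReal.ofReal (Real.pi^2 / δ^2 * (μ univ).toReal) := by
          gcongr
      _ = ENNReal.ofReal ((ε * (n:ℝ)^γ + ε * Real.pi^2 * (2:ℝ)^(2-γ) * (n:ℝ)^γ * (1-r)⁻¹)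
            + Real.pi^2 / δ^2 * (μ univ).toReal) := by
          rw [← ENNReal.ofReal_add (by positivity) (by positivity),
            ← ENNReal.ofReal_add (by positivity) (by positivity)]
      _ = ENNReal.ofReal (ε * (1 + Real.pi ^ 2 * (2:ℝ) ^ (2 - γ) * (1 - (2:ℝ) ^ (-γ))⁻¹) * (n : ℝ) ^ γ
            + Real.pi ^ 2 / δ ^ 2 * (μ univ).toReal) := by
          rw [← hr]
          congr 1
          ring
  rw [varV_eq_lintegral]
  exact ENNReal.toReal_le_of_le_ofReal hRHS0 L

end Upper

/-- For `γ ∈ (0,2]` and a nondecreasing integer sequence `n_k → ∞` with bounded ratios,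
the following are equivalent: (1) `V(n_k)/n_k^γ → 0`; (2) `G(x)/x^{2-γ} → 0` as `x → 0⁺`;
(3) `V(n)/n^γ → 0`. -/
theorem variance_null_tfae (μ : Measure ℝ) [IsFiniteMeasure μ]
    (hsupp : μ (Icc 0 Real.pi)ᶜ = 0)
    (γ : ℝ) (hγ : γ ∈ Ioc (0 : ℝ) 2)
    (n : ℕ → ℕ) (hpos : ∀ k, 0 < n k) (hmono : Monotone n)
    (htop : Tendsto n atTop atTop)
    (hratio : ∃ κ : ℝ, ∀ k, (n (k + 1) : ℝ) ≤ κ * (n k : ℝ)) :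
    List.TFAE
      [Tendsto (fun k : ℕ => varV μ (n k) / (n k : ℝ) ^ γ) atTop (𝓝 0),
       Tendsto (fun x : ℝ => specG μ x / x ^ (2 - γ)) (𝓝[>] 0) (𝓝 0),
       Tendsto (fun m : ℕ => varV μ m / (m : ℝ) ^ γ) atTop (𝓝 0)] := by
  obtain ⟨hγ0, hγ2⟩ := hγ
  have hπ := Real.pi_pos
  tfae_have 3 → 1 := by
    intro h3
    exact h3.comp htop
  tfae_have 1 → 2 := by
    intro h1
    obtain ⟨κ, hκ⟩ := hratio
    have hκ1 : (1:ℝ) ≤ κ := by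
      have h0 := hκ 0
      have h01 : (n 0 : ℝ) ≤ (n 1 : ℝ) := by exact_mod_cast hmono (by norm_num : (0:ℕ) ≤ 1)
      have hn0 : (0:ℝ) < (n 0 : ℝ) := by exact_mod_cast hpos 0
      nlinarith
    have hκ0 : (0:ℝ) < κ := by linarith
    -- step 1 : n_k^{2-γ} G(π/n_k) → 0
    have hG0 : Tendsto (fun k : ℕ => (n k : ℝ) ^ (2 - γ) * specG μ (Real.pi / (n k)))
        atTop (𝓝 0) := by
      apply squeeze_zero (g := fun k => Real.pi ^ 2 / 4 * (varV μ (n k) / (n k : ℝ) ^ γ))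
      · intro k
        have h : (0:ℝ) < (n k : ℝ) := by exact_mod_cast hpos k
        exact mul_nonneg (Real.rpow_nonneg h.le _) ENNReal.toReal_nonneg
      · intro k
        have hnk : (0:ℝ) < (n k : ℝ) := by exact_mod_cast hpos k
        have hnkγ : (0:ℝ) < (n k : ℝ) ^ γ := Real.rpow_pos_of_pos hnk γ
        have hl := varV_lower μ (n k) (hpos k)
        have en : (n k : ℝ) ^ γ * (n k : ℝ) ^ (2 - γ) = (n k : ℝ) ^ (2:ℕ) := by
          rw [← Real.rpow_natCast (n k : ℝ) 2, ← Real.rpow_add hnk]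
          norm_num
        have hG : 0 ≤ specG μ (Real.pi / (n k)) := ENNReal.toReal_nonneg
        rw [← mul_div_assoc, le_div_iff₀ hnkγ]
        calc (n k : ℝ) ^ (2 - γ) * specG μ (Real.pi / (n k)) * (n k : ℝ) ^ γ
            = (n k : ℝ) ^ (2:ℕ) * specG μ (Real.pi / (n k)) := by rw [← en]; ring
          _ = Real.pi ^ 2 / 4 * (4 / Real.pi ^ 2 * (n k : ℝ) ^ (2:ℕ) * specG μ (Real.pi / (n k))) := by
              field_simp
          _ ≤ Real.pi ^ 2 / 4 * varV μ (n k) := by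
              apply mul_le_mul_of_nonneg_left hl (by positivity)
      · have := h1.const_mul (Real.pi ^ 2 / 4)
        simpa using this
    -- step 2 : ε-δ argument
    apply tendsto_order.2
    constructor
    · intro a ha
      apply eventually_nhdsWithin_of_forall
      intro x hx
      have hx0 : (0:ℝ) < x := hx
      have : 0 ≤ specG μ x / x ^ (2 - γ) := by
        apply div_nonneg ENNReal.toReal_nonneg (Real.rpow_nonneg hx0.le _)
      linarith
    · intro ε hε
      have hbpos : (0:ℝ) < ε * Real.pi ^ (2 - γ) / κ ^ (2 - γ) := by
        have h1 : (0:ℝ) < Real.pi ^ (2 - γ) := Real.rpow_pos_of_pos hπ _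
        have h2 : (0:ℝ) < κ ^ (2 - γ) := Real.rpow_pos_of_pos hκ0 _
        positivity
      obtain ⟨K, hK⟩ := eventually_atTop.1 (hG0.eventually (gt_mem_nhds hbpos))
      have hnK : (0:ℝ) < (n K : ℝ) := by exact_mod_cast hpos K
      filter_upwards [Ioo_mem_nhdsGT_of_mem
        (⟨le_rfl, by positivity⟩ : (0:ℝ) ∈ Ico 0 (Real.pi / n K))] with x hx
      obtain ⟨hx0, hxK⟩ := hx
      -- find the first index m with π / n m < x
      have hex : ∃ j, Real.pi / (n j) < x := by
        obtain ⟨j, hj⟩ := (htop.eventually (eventually_gt_atTop ⌈Real.pi / x⌉₊)).exists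
        refine ⟨j, ?_⟩
        have hj' : Real.pi / x < (n j : ℝ) := by
          calc Real.pi / x ≤ (⌈Real.pi / x⌉₊ : ℝ) := Nat.le_ceil _
            _ < (n j : ℝ) := by exact_mod_cast hj
        have hnj : (0:ℝ) < (n j : ℝ) := by exact_mod_cast hpos j
        rw [div_lt_iff₀ hnj]
        rw [div_lt_iff₀ hx0] at hj'
        linarith
      set m := Nat.find hex with hm
      have hmlt : Real.pi / (n m) < x := Nat.find_spec hex
      have hKm : K < m := by
        by_contra hc
        push_neg at hc
        have : (n m : ℝ) ≤ (n K : ℝ) := by exact_mod_cast hmono hc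
        have hnm : (0:ℝ) < (n m : ℝ) := by exact_mod_cast hpos m
        have : Real.pi / (n K) ≤ Real.pi / (n m) := by
          apply div_le_div_of_nonneg_left hπ.le hnm this
        linarith
      have hm0 : m ≠ 0 := by omega
      set k := m - 1 with hk
      have hmk : m = k + 1 := by omega
      have hkK : K ≤ k := by omega
      have hxk : x ≤ Real.pi / (n k) := by
        have := Nat.find_min hex (show k < m by omega)
        push_neg at this
        exact this
      -- main estimate
      have hnk : (0:ℝ) < (n k : ℝ) := by exact_mod_cast hpos k
      have hnm : (0:ℝ) < (n m : ℝ) := by exact_mod_cast hpos m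
      have hGmono : specG μ x ≤ specG μ (Real.pi / (n k)) := by
        apply ENNReal.toReal_mono (measure_ne_top μ _)
        exact measure_mono (Icc_subset_Icc le_rfl hxk)
      have hxpow : (Real.pi / (n m)) ^ (2 - γ) ≤ x ^ (2 - γ) :=
        Real.rpow_le_rpow (by positivity) hmlt.le (by linarith)
      have hGnonneg : 0 ≤ specG μ (Real.pi / (n k)) := ENNReal.toReal_nonneg
      have step1 : specG μ x / x ^ (2 - γ)
          ≤ specG μ (Real.pi / (n k)) / (Real.pi / (n m)) ^ (2 - γ) := by
        apply div_le_div₀ hGnonneg hGmono (Real.rpow_pos_of_pos (by positivity) _) hxpow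
      refine lt_of_le_of_lt step1 ?_
      -- abbreviations
      set G := specG μ (Real.pi / (n k)) with hGdef
      set P := Real.pi ^ (2 - γ) with hP
      set Q := (n k : ℝ) ^ (2 - γ) with hQ
      set R := (n m : ℝ) ^ (2 - γ) with hR
      set Kp := κ ^ (2 - γ) with hKp
      have hPpos : 0 < P := Real.rpow_pos_of_pos hπ _
      have hQpos : 0 < Q := Real.rpow_pos_of_pos hnk _
      have hRpos : 0 < R := Real.rpow_pos_of_pos hnm _
      have hKppos : 0 < Kp := Real.rpow_pos_of_pos hκ0 _
      have hdenom : (Real.pi / (n m)) ^ (2 - γ) = P / R := by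
        rw [hP, hR, Real.div_rpow hπ.le hnm.le]
      have hRle : R ≤ Kp * Q := by
        rw [hR, hKp, hQ, ← Real.mul_rpow hκ0.le hnk.le]
        apply Real.rpow_le_rpow hnm.le ?_ (by linarith)
        rw [hmk] at *
        exact hκ k
      have hQG : Q * G < ε * P / Kp := hK k hkK
      rw [hdenom, div_div_eq_mul_div, div_lt_iff₀ hPpos]
      calc G * R ≤ G * (Kp * Q) := by
            apply mul_le_mul_of_nonneg_left hRle hGnonneg
        _ = Kp * (Q * G) := by ring
        _ < Kp * (ε * P / Kp) := by
            apply mul_lt_mul_of_pos_left hQG hKppos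
        _ = ε * P := by field_simp
  tfae_have 2 → 3 := by
    intro h2
    set D : ℝ := Real.pi ^ 2 * (2:ℝ) ^ (2 - γ) * (1 - (2:ℝ) ^ (-γ))⁻¹ with hD
    have hr1 : (2:ℝ) ^ (-γ) < 1 := Real.rpow_lt_one_of_one_lt_of_neg (by norm_num) (by linarith)
    have hr0 : (0:ℝ) ≤ (2:ℝ) ^ (-γ) := Real.rpow_nonneg (by norm_num) _
    have hD0 : 0 ≤ D := by
      have : (0:ℝ) < (1 - (2:ℝ) ^ (-γ))⁻¹ := inv_pos.2 (by linarith)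
      positivity
    have hD1 : (0:ℝ) < 1 + D := by linarith
    apply tendsto_order.2
    constructor
    · intro a ha
      apply Eventually.of_forall
      intro m
      have : 0 ≤ varV μ m / (m : ℝ) ^ γ :=
        div_nonneg (varV_nonneg μ m) (Real.rpow_nonneg (Nat.cast_nonneg m) _)
      linarith
    · intro a ha
      set ε : ℝ := a / (2 * (1 + D)) with hεdef
      have hε : 0 < ε := by positivity
      -- extract δ from h2
      have hev : ∀ᶠ x in 𝓝[>] (0:ℝ), specG μ x / x ^ (2 - γ) < ε :=
        h2.eventually (gt_mem_nhds hε)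
      obtain ⟨δ₀, hδ₀, hball⟩ := Metric.nhdsWithin_basis_ball.eventually_iff.1 hev
      set δ : ℝ := min (δ₀ / 2) Real.pi with hδdef
      have hδ : 0 < δ := lt_min (by linarith) hπ
      have hδπ : δ ≤ Real.pi := min_le_right _ _
      have hG : ∀ x : ℝ, 0 < x → x ≤ δ → specG μ x ≤ ε * x ^ (2 - γ) := by
        intro x hx0 hxδ
        have hxb : x ∈ Metric.ball (0:ℝ) δ₀ ∩ Ioi 0 := by
          constructor
          · rw [Metric.mem_ball, Real.dist_eq, sub_zero, abs_of_pos hx0]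
            have : δ ≤ δ₀ / 2 := min_le_left _ _
            linarith
          · exact hx0
        have := hball hxb
        have hxpow : (0:ℝ) < x ^ (2 - γ) := Real.rpow_pos_of_pos hx0 _
        rw [div_lt_iff₀ hxpow] at this
        linarith
      set C : ℝ := Real.pi ^ 2 / δ ^ 2 * (μ univ).toReal with hC
      have hC0 : 0 ≤ C := by
        have : (0:ℝ) ≤ (μ univ).toReal := ENNReal.toReal_nonneg
        positivity
      -- eventual bound
      have hev2 : ∀ᶠ m : ℕ in atTop, C / (m : ℝ) ^ γ < a / 2 := by
        have hpow : Tendsto (fun m : ℕ => (m : ℝ) ^ γ) atTop atTop :=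
          (tendsto_rpow_atTop hγ0).comp tendsto_natCast_atTop_atTop
        have := Tendsto.div_atTop (tendsto_const_nhds (x := C)) hpow
        exact this.eventually (gt_mem_nhds (by linarith))
      have hev3 : ∀ᶠ m : ℕ in atTop, 1 / (m : ℝ) ≤ δ := by
        have := tendsto_one_div_atTop_nhds_zero_nat.eventually (gt_mem_nhds hδ)
        filter_upwards [this] with m hm
        exact hm.le
      filter_upwards [eventually_ge_atTop 1, hev2, hev3] with m hm1 hm2 hm3
      have hmR : (0:ℝ) < (m : ℝ) := by exact_mod_cast hm1
      have hmγ : (0:ℝ) < (m : ℝ) ^ γ := Real.rpow_pos_of_pos hmR _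
      have hup := varV_upper μ hγ0 hγ2 hε hδ hδπ hG m hm1 hm3
      rw [← hD] at hup
      have : varV μ m / (m : ℝ) ^ γ ≤ ε * (1 + D) + C / (m : ℝ) ^ γ := by
        rw [div_le_iff₀ hmγ]
        calc varV μ m ≤ ε * (1 + D) * (m : ℝ) ^ γ + C := hup
          _ = (ε * (1 + D) + C / (m : ℝ) ^ γ) * (m : ℝ) ^ γ := by
              field_simp
      have hεD : ε * (1 + D) = a / 2 := by
        rw [hεdef]
        field_simp
      calc varV μ m / (m : ℝ) ^ γ ≤ ε * (1 + D) + C / (m : ℝ) ^ γ := this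
        _ < a / 2 + a / 2 := by rw [hεD]; linarith
        _ = a := by ring
  tfae_finish
end

section
/- Let μ = Σ_{k≥2} 4^{−k}·δ_{2π·2^{−k}}, a finite Borel measure on [0,π] consisting of atoms of mass 4^{−k} at the points 2π·2^{−k} for k ≥ 2. Then sup_k V(2^k) < ∞ while sup_n V(n) = ∞. (Hence the Leonov dichotomy — either V(n) → ∞ or sup_n V(n) < ∞ — fails without the condition that the covariances tend to zero.) -/
open MeasureTheory Filter Set Topology

namespace LeonovAux

open Real

lemma abs_sin_nat_mul_le (n : ℕ) (t : ℝ) : |Real.sin (n * t)| ≤ n * |Real.sin t| := by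
  induction n with
  | zero => simp
  | succ n ih =>
    have h1 : ((n : ℝ) + 1) * t = n * t + t := by ring
    push_cast
    rw [h1, Real.sin_add]
    calc |Real.sin (n * t) * Real.cos t + Real.cos (n * t) * Real.sin t|
        ≤ |Real.sin (n * t) * Real.cos t| + |Real.cos (n * t) * Real.sin t| := abs_add_le _ _
      _ ≤ |Real.sin (n * t)| * 1 + 1 * |Real.sin t| := by
          rw [abs_mul, abs_mul]
          gcongr
          · exact Real.abs_cos_le_one t
          · exact Real.abs_cos_le_one (n * t)
      _ ≤ (n : ℝ) * |Real.sin t| + |Real.sin t| := by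
          rw [mul_one, one_mul]
          gcongr
      _ = ((n : ℝ) + 1) * |Real.sin t| := by ring

lemma sin_nat_mul_sq_le (n : ℕ) (t : ℝ) :
    Real.sin (n * t) ^ 2 ≤ (n : ℝ) ^ 2 * Real.sin t ^ 2 := by
  have h := abs_sin_nat_mul_le n t
  have h2 := abs_nonneg (Real.sin (n * t))
  calc Real.sin (n * t) ^ 2 = |Real.sin (n * t)| ^ 2 := (sq_abs _).symm
    _ ≤ ((n : ℝ) * |Real.sin t|) ^ 2 := by
        apply pow_le_pow_left₀ h2 h
    _ = (n : ℝ) ^ 2 * Real.sin t ^ 2 := by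
        rw [mul_pow, sq_abs]

lemma fejer_nonneg (n : ℕ) (y : ℝ) : 0 ≤ fejerKernel n y := by
  unfold fejerKernel
  split
  · positivity
  · positivity

lemma fejer_le_sq (n : ℕ) (y : ℝ) : fejerKernel n y ≤ (n : ℝ) ^ 2 := by
  unfold fejerKernel
  split
  · exact le_rfl
  · rcases eq_or_ne (Real.sin (y / 2)) 0 with h | h
    · rw [h]
      simp [zero_pow]
    · rw [div_le_iff₀ (by positivity)]
      have := sin_nat_mul_sq_le n (y / 2)
      calc Real.sin (↑n * y / 2) ^ 2 = Real.sin (↑n * (y / 2)) ^ 2 := by ring_nf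
        _ ≤ (n : ℝ) ^ 2 * Real.sin (y / 2) ^ 2 := this

lemma fejer_meas (n : ℕ) : Measurable (fejerKernel n) := by
  unfold fejerKernel
  apply Measurable.ite
  · exact measurableSet_eq
  · exact measurable_const
  · fun_prop

/-- the atom locations -/
noncomputable def pt (k : ℕ) : ℝ := 2 * Real.pi / 2 ^ (k + 2)

lemma pt_mem (k : ℕ) : pt k ∈ Icc (0 : ℝ) Real.pi := by
  have hπ := Real.pi_pos
  rw [pt]
  constructor
  · positivity
  · rw [div_le_iff₀ (by positivity)]
    have h4 : (4 : ℝ) ≤ 2 ^ (k + 2) := by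
      calc (4 : ℝ) = 2 ^ 2 := by norm_num
        _ ≤ 2 ^ (k + 2) := by
          apply pow_le_pow_right₀ one_le_two
          omega
    nlinarith

lemma varV_eq (μ : Measure ℝ)
    (hμ : μ = Measure.sum (fun k : ℕ =>
      ((4 : ENNReal) ^ (k + 2))⁻¹ • Measure.dirac (2 * Real.pi / 2 ^ (k + 2)))) (n : ℕ) :
    varV μ n = ∑' k : ℕ, ((4 : ℝ) ^ (k + 2))⁻¹ * fejerKernel n (pt k) := by
  classical
  have hmeas := fejer_meas n
  have hs : MeasurableSet (Icc (0 : ℝ) Real.pi) := measurableSet_Icc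
  have hmeas' : Measurable (fun y => ENNReal.ofReal (fejerKernel n y)) :=
    ENNReal.measurable_ofReal.comp hmeas
  rw [varV, hμ, integral_eq_lintegral_of_nonneg_ae (ae_of_all _ fun y => fejer_nonneg n y)
    hmeas.aestronglyMeasurable]
  rw [Measure.restrict_sum _ hs, lintegral_sum_measure]
  have hres : ∀ k : ℕ,
      ((((4 : ENNReal) ^ (k + 2))⁻¹ • Measure.dirac (2 * Real.pi / 2 ^ (k + 2))).restrict
        (Icc (0 : ℝ) Real.pi))
      = ((4 : ENNReal) ^ (k + 2))⁻¹ • Measure.dirac (2 * Real.pi / 2 ^ (k + 2)) := by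
    intro k
    rw [Measure.restrict_smul, MeasureTheory.restrict_dirac' hs, if_pos (show 2 * Real.pi / 2 ^ (k + 2) ∈ Icc (0 : ℝ) Real.pi from pt_mem k)]
  simp_rw [hres, lintegral_smul_measure, lintegral_dirac' _ hmeas']
  have hne : ∀ k : ℕ, ((4 : ENNReal) ^ (k + 2))⁻¹ *
      ENNReal.ofReal (fejerKernel n (2 * Real.pi / 2 ^ (k + 2))) ≠ ⊤ :=
    fun k => ENNReal.mul_ne_top (by simp) ENNReal.ofReal_ne_top
  simp only [smul_eq_mul]
  rw [ENNReal.tsum_toReal_eq hne]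
  apply tsum_congr
  intro k
  rw [ENNReal.toReal_mul, ENNReal.toReal_ofReal (fejer_nonneg n _)]
  have : ((4 : ENNReal) ^ (k + 2))⁻¹.toReal = ((4 : ℝ) ^ (k + 2))⁻¹ := by
    rw [ENNReal.toReal_inv, ENNReal.toReal_pow]
    norm_num
  rw [this, pt]

lemma term_nonneg (n k : ℕ) : 0 ≤ ((4 : ℝ) ^ (k + 2))⁻¹ * fejerKernel n (pt k) := by
  have := fejer_nonneg n (pt k)
  positivity

lemma term_summable (n : ℕ) :
    Summable (fun k : ℕ => ((4 : ℝ) ^ (k + 2))⁻¹ * fejerKernel n (pt k)) := by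
  have hg : Summable (fun k : ℕ => (n : ℝ) ^ 2 * ((4 : ℝ)⁻¹) ^ k) :=
    (summable_geometric_of_lt_one (by norm_num) (by norm_num)).mul_left _
  refine Summable.of_nonneg_of_le (term_nonneg n) (fun k => ?_) hg
  have h1 : ((4 : ℝ) ^ (k + 2))⁻¹ ≤ ((4 : ℝ)⁻¹) ^ k := by
    rw [inv_pow]
    apply inv_anti₀ (by positivity)
    apply pow_le_pow_right₀ (by norm_num)
    omega
  calc ((4 : ℝ) ^ (k + 2))⁻¹ * fejerKernel n (pt k)
      ≤ ((4 : ℝ)⁻¹) ^ k * (n : ℝ) ^ 2 := by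
        apply mul_le_mul h1 (fejer_le_sq n _) (fejer_nonneg n _) (by positivity)
    _ = (n : ℝ) ^ 2 * ((4 : ℝ)⁻¹) ^ k := by ring

lemma pt_ne_zero (k : ℕ) : pt k ≠ 0 := by
  have := Real.pi_pos
  rw [pt]
  positivity

/-- value of the kernel at an atom -/
lemma fejer_pt (n k : ℕ) :
    fejerKernel n (pt k) =
      Real.sin ((n : ℝ) * Real.pi / 2 ^ (k + 2)) ^ 2 /
        Real.sin (Real.pi / 2 ^ (k + 2)) ^ 2 := by
  rw [fejerKernel, if_neg (pt_ne_zero k), pt]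
  have h1 : (n : ℝ) * (2 * Real.pi / 2 ^ (k + 2)) / 2 = (n : ℝ) * Real.pi / 2 ^ (k + 2) := by
    ring
  have h2 : (2 * Real.pi / 2 ^ (k + 2)) / 2 = Real.pi / 2 ^ (k + 2) := by ring
  rw [h1, h2]

lemma geom4_split (a b : ℕ) : ∑ i ∈ Finset.range (a + b), 4 ^ i
    = ∑ i ∈ Finset.range a, 4 ^ i + 4 ^ a * ∑ i ∈ Finset.range b, 4 ^ i := by
  induction b with
  | zero => simp
  | succ b ih =>
    rw [show a + (b + 1) = (a + b) + 1 by omega, Finset.sum_range_succ, ih,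
      Finset.sum_range_succ]
    ring

lemma geom4_closed (s : ℕ) : 3 * ∑ i ∈ Finset.range s, 4 ^ i + 1 = 4 ^ s := by
  induction s with
  | zero => simp
  | succ s ih =>
    calc 3 * ∑ i ∈ Finset.range (s + 1), 4 ^ i + 1
        = (3 * ∑ i ∈ Finset.range s, 4 ^ i + 1) + 3 * 4 ^ s := by
          rw [Finset.sum_range_succ]; ring
      _ = 4 ^ s + 3 * 4 ^ s := by rw [ih]
      _ = 4 ^ (s + 1) := by ring

lemma geom4_lb (t : ℕ) : 4 ^ t ≤ ∑ i ∈ Finset.range (t + 1), 4 ^ i :=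
  Finset.single_le_sum (f := fun i => 4 ^ i) (fun i _ => Nat.zero_le _)
    (Finset.self_mem_range_succ t)

lemma term_lb (m t : ℕ) (ht : t < m) :
    1 / (2 * Real.pi ^ 2) ≤
      ((4 : ℝ) ^ (2 * t + 2))⁻¹ *
        fejerKernel (∑ i ∈ Finset.range m, 4 ^ i) (pt (2 * t)) := by
  have hπ := Real.pi_pos
  set n : ℕ := ∑ i ∈ Finset.range m, 4 ^ i with hn
  set r : ℕ := ∑ i ∈ Finset.range (t + 1), 4 ^ i with hr
  set q : ℕ := ∑ i ∈ Finset.range (m - (t + 1)), 4 ^ i with hq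
  have hsplit : n = r + 4 ^ (t + 1) * q := by
    have h := geom4_split (t + 1) (m - (t + 1))
    rw [show (t + 1) + (m - (t + 1)) = m by omega] at h
    rw [hn, hr, hq]
    exact h
  have hr1 : (1 : ℝ) ≤ (r : ℝ) := by
    have h := geom4_lb t
    rw [← hr] at h
    have h1 : 1 ≤ r := le_trans (Nat.one_le_pow _ _ (by norm_num)) h
    exact_mod_cast h1
  have hr2 : 3 * (r : ℝ) + 1 = 4 ^ (t + 1) := by
    have h := geom4_closed (t + 1)
    rw [← hr] at h
    exact_mod_cast h
  have hP : (0 : ℝ) < 4 ^ (t + 1) := by positivity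
  have h4 : (2 : ℝ) ^ (2 * t + 2) = 4 ^ (t + 1) := by
    rw [show 2 * t + 2 = 2 * (t + 1) by ring, pow_mul]
    norm_num
  have harg : (n : ℝ) * Real.pi / 2 ^ (2 * t + 2)
      = (r : ℝ) * Real.pi / 4 ^ (t + 1) + (q : ℤ) * Real.pi := by
    rw [h4]
    have hsplit' : (n : ℝ) = (r : ℝ) + 4 ^ (t + 1) * (q : ℝ) := by
      rw [hsplit]; push_cast; ring
    rw [hsplit']
    push_cast
    field_simp
  -- numerator
  have hx1 : Real.pi / 4 ≤ (r : ℝ) * Real.pi / 4 ^ (t + 1) := by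
    rw [div_le_div_iff₀ (by norm_num) hP]
    nlinarith [hπ.le, hr1]
  have hx2 : (r : ℝ) * Real.pi / 4 ^ (t + 1) ≤ Real.pi / 2 := by
    rw [div_le_div_iff₀ hP (by norm_num)]
    nlinarith [hπ.le, hr1]
  have hsin : Real.sqrt 2 / 2 ≤ Real.sin ((r : ℝ) * Real.pi / 4 ^ (t + 1)) := by
    have hmono := Real.strictMonoOn_sin.monotoneOn
      (a := Real.pi / 4) (b := (r : ℝ) * Real.pi / 4 ^ (t + 1))
      ⟨by linarith, by linarith⟩ ⟨by linarith, by linarith⟩ hx1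
    rwa [Real.sin_pi_div_four] at hmono
  have hsin_sq : 1 / 2 ≤ Real.sin ((r : ℝ) * Real.pi / 4 ^ (t + 1)) ^ 2 := by
    have h2 : (Real.sqrt 2 / 2) ^ 2 = 1 / 2 := by
      rw [div_pow, Real.sq_sqrt (by norm_num : (0 : ℝ) ≤ 2)]
      norm_num
    calc (1 : ℝ) / 2 = (Real.sqrt 2 / 2) ^ 2 := h2.symm
      _ ≤ _ := by
          apply pow_le_pow_left₀ (by positivity) hsin
  have hnum : Real.sin ((n : ℝ) * Real.pi / 2 ^ (2 * t + 2)) ^ 2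
      = Real.sin ((r : ℝ) * Real.pi / 4 ^ (t + 1)) ^ 2 := by
    rw [harg, Real.sin_add_int_mul_pi, mul_pow]
    have hsq : ((- 1 : ℝ) ^ (q : ℤ)) ^ 2 = 1 := by
      rcases Int.even_or_odd (q : ℤ) with h | h
      · rw [h.neg_one_zpow]; norm_num
      · rw [h.neg_one_zpow]; norm_num
    rw [hsq, one_mul]
  -- denominator
  have hBpos : 0 < Real.sin (Real.pi / 2 ^ (2 * t + 2)) := by
    apply Real.sin_pos_of_pos_of_lt_pi
    · positivity
    · rw [div_lt_iff₀ (by positivity)]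
      nlinarith [one_lt_pow₀ (a := (2:ℝ)) (by norm_num) (n := 2 * t + 2) (by omega)]
  have hBle : Real.sin (Real.pi / 2 ^ (2 * t + 2)) ≤ Real.pi / 4 ^ (t + 1) := by
    rw [← h4]
    exact le_of_lt (Real.sin_lt (by positivity))
  -- assemble
  have hfejer : (1 / 2) / (Real.pi / 4 ^ (t + 1)) ^ 2 ≤ fejerKernel n (pt (2 * t)) := by
    rw [fejer_pt, hnum]
    apply div_le_div₀ (by positivity) hsin_sq (by positivity)
    apply pow_le_pow_left₀ hBpos.le hBle
  have hEq : 1 / (2 * Real.pi ^ 2)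
      = ((4 : ℝ) ^ (2 * t + 2))⁻¹ * ((1 / 2) / (Real.pi / 4 ^ (t + 1)) ^ 2) := by
    have h44 : ((4 : ℝ) ^ (t + 1)) ^ 2 = 4 ^ (2 * t + 2) := by
      rw [← pow_mul]
      congr 1
      ring
    rw [div_pow, ← h44]
    field_simp
  calc 1 / (2 * Real.pi ^ 2)
      = ((4 : ℝ) ^ (2 * t + 2))⁻¹ * ((1 / 2) / (Real.pi / 4 ^ (t + 1)) ^ 2) := hEq
    _ ≤ ((4 : ℝ) ^ (2 * t + 2))⁻¹ * fejerKernel n (pt (2 * t)) := by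
        apply mul_le_mul_of_nonneg_left hfejer (by positivity)


end LeonovAux

open LeonovAux

/-- For `μ = Σ_{k≥2} 4^{-k} δ_{2π 2^{-k}}`, one has `sup_k V(2^k) < ∞`
while `sup_n V(n) = ∞`: the Leonov dichotomy fails. -/
theorem leonov_dichotomy_fails (μ : Measure ℝ)
    (hμ : μ = Measure.sum (fun k : ℕ =>
      ((4 : ENNReal) ^ (k + 2))⁻¹ • Measure.dirac (2 * Real.pi / 2 ^ (k + 2)))) :
    (∃ M : ℝ, ∀ k : ℕ, varV μ (2 ^ k) ≤ M) ∧
    ¬ ∃ M : ℝ, ∀ n : ℕ, varV μ n ≤ M := by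
  constructor
  · refine ⟨1, fun k => ?_⟩
    rw [varV_eq μ hμ]
    set m : ℕ := k - 1 with hm
    set T : ℕ → ℝ := fun j => ((4 : ℝ) ^ (j + 2))⁻¹ * fejerKernel (2 ^ k) (pt j) with hT
    have hzero : ∀ j, j < m → T j = 0 := by
      intro j hj
      have hjk : j + 2 ≤ k := by omega
      have harg : ((2 ^ k : ℕ) : ℝ) * Real.pi / 2 ^ (j + 2)
          = ((2 ^ (k - (j + 2)) : ℕ) : ℝ) * Real.pi := by
        push_cast
        have h2 : (2 : ℝ) ^ k = 2 ^ (k - (j + 2)) * 2 ^ (j + 2) := by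
          rw [← pow_add]
          congr 1
          omega
        rw [h2]
        field_simp
      rw [hT]
      simp only
      rw [fejer_pt, harg, Real.sin_nat_mul_pi]
      norm_num
    have hshift : ∑' j, T j = ∑' i, T (i + m) := by
      refine (Function.Injective.tsum_eq (add_left_injective m) ?_).symm
      intro j hj
      rcases lt_or_ge j m with h | h
      · exact absurd (hzero j h) hj
      · exact ⟨j - m, by show j - m + m = j; omega⟩
    have hsumT : Summable T := term_summable (2 ^ k)
    have hbound : ∀ i : ℕ, T (i + m) ≤ (4 : ℝ)⁻¹ * ((4 : ℝ)⁻¹) ^ i := by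
      intro i
      have hsq : ((2 ^ k : ℕ) : ℝ) ^ 2 = 4 ^ k := by
        push_cast
        rw [← pow_mul, mul_comm, pow_mul]
        norm_num
      have hk : k ≤ m + 1 := by omega
      calc T (i + m) ≤ ((4 : ℝ) ^ (i + m + 2))⁻¹ * ((2 ^ k : ℕ) : ℝ) ^ 2 := by
            apply mul_le_mul_of_nonneg_left (fejer_le_sq _ _) (by positivity)
        _ = ((4 : ℝ) ^ (i + m + 2))⁻¹ * 4 ^ k := by rw [hsq]
        _ ≤ ((4 : ℝ) ^ (i + m + 2))⁻¹ * 4 ^ (m + 1) := by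
            apply mul_le_mul_of_nonneg_left _ (by positivity)
            apply pow_le_pow_right₀ (by norm_num) hk
        _ = (4 : ℝ)⁻¹ * ((4 : ℝ)⁻¹) ^ i := by
            rw [inv_pow]
            field_simp
            ring
    calc ∑' j, T j = ∑' i, T (i + m) := hshift
      _ ≤ ∑' i, (4 : ℝ)⁻¹ * ((4 : ℝ)⁻¹) ^ i := by
          apply Summable.tsum_le_tsum hbound (hsumT.comp_injective (add_left_injective m))
          exact (summable_geometric_of_lt_one (by norm_num) (by norm_num)).mul_left _
      _ = (4 : ℝ)⁻¹ * (1 - 4⁻¹)⁻¹ := by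
          rw [tsum_mul_left, tsum_geometric_of_lt_one (by norm_num) (by norm_num)]
      _ ≤ 1 := by norm_num
  · rintro ⟨M, hM⟩
    have hπ := Real.pi_pos
    set x : ℝ := 2 * Real.pi ^ 2 * |M| with hx
    set m : ℕ := ⌈x⌉₊ + 1 with hmdef
    set n : ℕ := ∑ i ∈ Finset.range m, 4 ^ i with hndef
    have h1 : varV μ n ≤ M := hM n
    have h2 : (m : ℝ) * (1 / (2 * Real.pi ^ 2)) ≤ varV μ n := by
      rw [varV_eq μ hμ]
      have hs := Summable.sum_le_tsum ((Finset.range m).image (fun t => 2 * t))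
        (fun j _ => term_nonneg n j) (term_summable n)
      rw [Finset.sum_image (by intro a _ b _ h; simp only at h; omega)] at hs
      refine le_trans ?_ hs
      calc (m : ℝ) * (1 / (2 * Real.pi ^ 2))
          = ∑ _t ∈ Finset.range m, 1 / (2 * Real.pi ^ 2) := by
            rw [Finset.sum_const, Finset.card_range, nsmul_eq_mul]
        _ ≤ ∑ t ∈ Finset.range m, ((4 : ℝ) ^ (2 * t + 2))⁻¹ * fejerKernel n (pt (2 * t)) :=
            Finset.sum_le_sum (fun t ht => term_lb m t (Finset.mem_range.mp ht))
    have h3 : M < (m : ℝ) * (1 / (2 * Real.pi ^ 2)) := by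
      have hceil : x ≤ (⌈x⌉₊ : ℝ) := Nat.le_ceil x
      have hmx : x + 1 ≤ (m : ℝ) := by
        rw [hmdef]
        push_cast
        linarith
      have habs : M ≤ |M| := le_abs_self M
      have hp2 : (0 : ℝ) < 2 * Real.pi ^ 2 := by positivity
      rw [mul_one_div, lt_div_iff₀ hp2]
      nlinarith [habs, hmx, hp2]
    linarith
end

section
/- Let γ ∈ (0,2), K₀ > 0, and let h : [0,∞) → [0,∞) be nondecreasing and right-continuous with h(0) = 0, satisfying h(y) ≤ C·y^{2−γ} for all y > 0 and some constant C, and suppose ∫_{(0,∞)} sin²(rx)/x² dh(x) = K₀·r^γ for every r > 0. Define ψ(y) := ∫_{(y,∞)} x^{−2} dh(x) for y > 0 (which is finite). Then for every r > 0, lim_{a→∞} ∫_0^a sin(ry)·ψ(y) dy = (r/2)^{γ−1}·K₀. -/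
open MeasureTheory Filter Set Topology

/-- Dyadic covering of `(y, ∞)`. -/
lemma psi_aux_dyadic {y x : ℝ} (hy : 0 < y) (hx : y < x) :
    ∃ n : ℕ, 2 ^ n * y < x ∧ x ≤ 2 ^ (n + 1) * y := by
  classical
  have hex : ∃ m : ℕ, x ≤ 2 ^ (m + 1) * y := by
    obtain ⟨m, hm⟩ := pow_unbounded_of_one_lt (x / y) (one_lt_two (α := ℝ))
    rw [div_lt_iff₀ hy] at hm
    have h2 : (2 : ℝ) ^ m ≤ 2 ^ (m + 1) := by
      apply pow_le_pow_right₀ one_le_two (Nat.le_succ m)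
    exact ⟨m, le_trans hm.le (by nlinarith)⟩
  set n := Nat.find hex with hn
  refine ⟨n, ?_, Nat.find_spec hex⟩
  rcases Nat.eq_zero_or_pos n with h0 | hpos
  · rw [h0]; simpa using hx
  · have hmin : ¬ x ≤ 2 ^ (n - 1 + 1) * y := Nat.find_min hex (by omega)
    rw [Nat.sub_add_cancel hpos] at hmin
    exact lt_of_not_ge hmin

/-- Algebraic identity for the dyadic term. -/
lemma psi_aux_term (γ C y : ℝ) (hy : 0 < y) (n : ℕ) :
    ((2 ^ n * y)⁻¹) ^ 2 * (C * (2 ^ (n + 1) * y) ^ (2 - γ)) =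
      C * 2 ^ (2 - γ) * y ^ (-γ) * ((2 : ℝ) ^ (-γ)) ^ n := by
  have l1 : ((2 : ℝ) ^ n)⁻¹ ^ 2 = (2 : ℝ) ^ (-(2 : ℝ) * n) := by
    rw [← Real.rpow_natCast 2 n, ← Real.rpow_neg (by norm_num),
      ← Real.rpow_natCast ((2 : ℝ) ^ (-(n : ℝ))) 2, ← Real.rpow_mul (by norm_num)]
    norm_num; ring_nf
  have l2 : ((2 : ℝ) ^ (n + 1)) ^ (2 - γ) = (2 : ℝ) ^ (((n : ℝ) + 1) * (2 - γ)) := by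
    rw [← Real.rpow_natCast 2 (n + 1), ← Real.rpow_mul (by norm_num)]
    push_cast; ring_nf
  have l3 : ((2 : ℝ) ^ (-γ)) ^ n = (2 : ℝ) ^ (-γ * (n : ℝ)) := by
    rw [← Real.rpow_natCast ((2 : ℝ) ^ (-γ)) n, ← Real.rpow_mul (by norm_num)]
  have l4 : (y⁻¹) ^ 2 * y ^ (2 - γ) = y ^ (-γ) := by
    have e : (y⁻¹) ^ 2 = y ^ (-2 : ℝ) := by
      rw [Real.rpow_neg hy.le, Real.rpow_two, ← inv_pow]
    rw [e, ← Real.rpow_add hy]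
    congr 1; ring
  calc ((2 ^ n * y)⁻¹) ^ 2 * (C * (2 ^ (n + 1) * y) ^ (2 - γ))
      = (((2 : ℝ) ^ n)⁻¹ ^ 2 * ((2 : ℝ) ^ (n + 1)) ^ (2 - γ)) *
          ((y⁻¹) ^ 2 * y ^ (2 - γ)) * C := by
        rw [mul_inv, mul_pow, Real.mul_rpow (by positivity) hy.le]; ring
    _ = ((2 : ℝ) ^ (-(2 : ℝ) * n) * (2 : ℝ) ^ (((n : ℝ) + 1) * (2 - γ))) * y ^ (-γ) * C := by
        rw [l1, l2, l4]
    _ = C * 2 ^ (2 - γ) * y ^ (-γ) * ((2 : ℝ) ^ (-γ)) ^ n := by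
        rw [l3, ← Real.rpow_add two_pos,
          show -(2 : ℝ) * n + ((n : ℝ) + 1) * (2 - γ) = (2 - γ) + -γ * n by ring,
          Real.rpow_add two_pos]
        ring

/-- The tail Lebesgue integral bound `∫_{(y,∞)} x⁻² dh ≤ D y^{-γ}`. -/
lemma psi_aux_tail (γ C : ℝ) (hγ0 : 0 < γ) (hγ2 : γ < 2) (h : StieltjesFunction ℝ)
    (hnn : ∀ y : ℝ, 0 ≤ h y)
    (hbound : ∀ y : ℝ, 0 < y → h y ≤ C * y ^ (2 - γ)) (hC : 0 ≤ C)
    {y : ℝ} (hy : 0 < y) :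
    ∫⁻ x in Ioi y, ENNReal.ofReal (x⁻¹ ^ 2) ∂h.measure ≤
      ENNReal.ofReal (C * 2 ^ (2 - γ) / (1 - 2 ^ (-γ)) * y ^ (-γ)) := by
  have hq0 : (0 : ℝ) < 2 ^ (-γ) := Real.rpow_pos_of_pos two_pos _
  have hq1 : (2 : ℝ) ^ (-γ) < 1 :=
    Real.rpow_lt_one_of_one_lt_of_neg one_lt_two (by linarith)
  set q : ℝ := 2 ^ (-γ)
  set c : ℝ := C * 2 ^ (2 - γ) * y ^ (-γ) with hc
  have hc0 : 0 ≤ c := by positivity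
  have cover : Ioi y ⊆ ⋃ n : ℕ, Ioc (2 ^ n * y) (2 ^ (n + 1) * y) := by
    intro x hx
    obtain ⟨n, h1, h2⟩ := psi_aux_dyadic hy hx
    exact mem_iUnion.2 ⟨n, h1, h2⟩
  calc ∫⁻ x in Ioi y, ENNReal.ofReal (x⁻¹ ^ 2) ∂h.measure
      ≤ ∫⁻ x in ⋃ n : ℕ, Ioc (2 ^ n * y) (2 ^ (n + 1) * y),
          ENNReal.ofReal (x⁻¹ ^ 2) ∂h.measure := lintegral_mono_set cover
    _ ≤ ∑' n : ℕ, ∫⁻ x in Ioc (2 ^ n * y) (2 ^ (n + 1) * y),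
          ENNReal.ofReal (x⁻¹ ^ 2) ∂h.measure := lintegral_iUnion_le _ _
    _ ≤ ∑' n : ℕ, ENNReal.ofReal (c * q ^ n) := by
        apply ENNReal.tsum_le_tsum
        intro n
        have ha : (0 : ℝ) < 2 ^ n * y := by positivity
        calc ∫⁻ x in Ioc (2 ^ n * y) (2 ^ (n + 1) * y),
              ENNReal.ofReal (x⁻¹ ^ 2) ∂h.measure
            ≤ ∫⁻ _ in Ioc (2 ^ n * y) (2 ^ (n + 1) * y),
              ENNReal.ofReal (((2 ^ n * y)⁻¹) ^ 2) ∂h.measure := by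
              apply setLIntegral_mono measurable_const
              intro x hx
              apply ENNReal.ofReal_le_ofReal
              have hx0 : 0 < x := lt_trans ha hx.1
              gcongr
              exact hx.1.le
          _ = ENNReal.ofReal (((2 ^ n * y)⁻¹) ^ 2) *
                h.measure (Ioc (2 ^ n * y) (2 ^ (n + 1) * y)) := setLIntegral_const _ _
          _ ≤ ENNReal.ofReal (((2 ^ n * y)⁻¹) ^ 2) *
                ENNReal.ofReal (C * (2 ^ (n + 1) * y) ^ (2 - γ)) := by
              gcongr
              rw [h.measure_Ioc]
              apply ENNReal.ofReal_le_ofReal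
              have hb : (0 : ℝ) < 2 ^ (n + 1) * y := by positivity
              have := hbound _ hb
              have := hnn (2 ^ n * y)
              linarith
          _ = ENNReal.ofReal (c * q ^ n) := by
              rw [← ENNReal.ofReal_mul (by positivity), psi_aux_term γ C y hy n]
    _ = ENNReal.ofReal c * ∑' n : ℕ, (ENNReal.ofReal q) ^ n := by
        rw [← ENNReal.tsum_mul_left]
        congr 1; funext n
        rw [← ENNReal.ofReal_pow hq0.le, ← ENNReal.ofReal_mul hc0]
    _ = ENNReal.ofReal c * (1 - ENNReal.ofReal q)⁻¹ := by
        rw [ENNReal.tsum_geometric]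
    _ = ENNReal.ofReal (C * 2 ^ (2 - γ) / (1 - 2 ^ (-γ)) * y ^ (-γ)) := by
        have e1 : (1 : ENNReal) - ENNReal.ofReal q = ENNReal.ofReal (1 - q) := by
          rw [ENNReal.ofReal_sub 1 hq0.le, ENNReal.ofReal_one]
        rw [e1, ← ENNReal.ofReal_inv_of_pos (by linarith), ← ENNReal.ofReal_mul hc0]
        congr 1
        rw [hc]; field_simp; rfl

/-- The sine interval integral. -/
lemma psi_aux_sin_int (r b : ℝ) (hr : 0 < r) :
    ∫ y in (0 : ℝ)..b, Real.sin (r * y) = (1 - Real.cos (r * b)) / r := by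
  rw [intervalIntegral.integral_comp_mul_left Real.sin hr.ne']
  rw [integral_sin, mul_zero, Real.cos_zero, smul_eq_mul]
  field_simp

/-- Computation of the inner integral in Fubini's theorem. -/
lemma psi_aux_inner (r a x : ℝ) (hr : 0 < r) (ha : 0 < a) (hx : 0 < x) :
    ∫ y in Ioc (0 : ℝ) a, (Iio x).indicator (fun y => Real.sin (r * y) * (x⁻¹ ^ 2)) y =
      x⁻¹ ^ 2 * ((1 - Real.cos (r * min a x)) / r) := by
  rw [setIntegral_indicator measurableSet_Iio]
  rcases le_or_gt x a with hxa | hax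
  · have hs : Ioc (0 : ℝ) a ∩ Iio x = Ioo 0 x := by
      ext z
      simp only [mem_inter_iff, mem_Ioc, mem_Iio, mem_Ioo]
      exact ⟨fun ⟨⟨h1, _⟩, h3⟩ => ⟨h1, h3⟩, fun ⟨h1, h3⟩ => ⟨⟨h1, h3.le.trans hxa⟩, h3⟩⟩
    rw [hs, min_eq_right hxa]
    rw [← integral_Ioc_eq_integral_Ioo, ← intervalIntegral.integral_of_le hx.le]
    rw [intervalIntegral.integral_mul_const, psi_aux_sin_int r x hr]
    ring
  · have hs : Ioc (0 : ℝ) a ∩ Iio x = Ioc 0 a := by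
      rw [inter_eq_left]
      exact fun z hz => lt_of_le_of_lt hz.2 hax
    rw [hs, min_eq_left hax.le]
    rw [← intervalIntegral.integral_of_le ha.le]
    rw [intervalIntegral.integral_mul_const, psi_aux_sin_int r a hr]
    ring

/-- Under the hypotheses of the identification lemma, the function
`ψ(y) = ∫_{(y,∞)} x⁻² dh(x)` is well defined (the integrand is integrable), and
its truncated sine transform satisfies
`∫_0^a sin(ry) ψ(y) dy → (r/2)^{γ-1} K₀` as `a → ∞`, for every `r > 0`. -/
theorem psi_sine_transform (γ K₀ C : ℝ) (hγ : γ ∈ Ioo (0 : ℝ) 2) (hK₀ : 0 < K₀)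
    (h : StieltjesFunction ℝ) (hzero : ∀ y : ℝ, y ≤ 0 → h y = 0)
    (hnn : ∀ y : ℝ, 0 ≤ h y)
    (hbound : ∀ y : ℝ, 0 < y → h y ≤ C * y ^ (2 - γ))
    (hint : ∀ r : ℝ, 0 < r →
      ∫ x in Ioi (0 : ℝ), Real.sin (r * x) ^ 2 / x ^ 2 ∂h.measure = K₀ * r ^ γ) :
    (∀ y : ℝ, 0 < y → IntegrableOn (fun x : ℝ => x⁻¹ ^ 2) (Ioi y) h.measure) ∧
    ∀ r : ℝ, 0 < r →
      Tendsto (fun a : ℝ =>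
          ∫ y in (0 : ℝ)..a, Real.sin (r * y) * ∫ x in Ioi y, x⁻¹ ^ 2 ∂h.measure)
        atTop (𝓝 ((r / 2) ^ (γ - 1) * K₀)) := by
  obtain ⟨hγ0, hγ2⟩ := hγ
  set μ := h.measure with hμ
  have hC : 0 ≤ C := le_trans (hnn 1) (by simpa using hbound 1 one_pos)
  set D : ℝ := C * 2 ^ (2 - γ) / (1 - 2 ^ (-γ)) with hD
  have hq1 : (2 : ℝ) ^ (-γ) < 1 :=
    Real.rpow_lt_one_of_one_lt_of_neg one_lt_two (by linarith)
  have hD0 : 0 ≤ D := by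
    apply div_nonneg (by positivity) (by linarith)
  have tailb : ∀ y : ℝ, 0 < y →
      ∫⁻ x in Ioi y, ENNReal.ofReal (x⁻¹ ^ 2) ∂μ ≤ ENNReal.ofReal (D * y ^ (-γ)) :=
    fun y hy => psi_aux_tail γ C hγ0 hγ2 h hnn hbound hC hy
  have hmeas : Measurable fun x : ℝ => x⁻¹ ^ 2 := measurable_inv.pow_const 2
  have int1 : ∀ y : ℝ, 0 < y → IntegrableOn (fun x : ℝ => x⁻¹ ^ 2) (Ioi y) μ := by
    intro y hy
    refine ⟨hmeas.aestronglyMeasurable, ?_⟩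
    rw [hasFiniteIntegral_iff_ofReal (Eventually.of_forall fun x => by positivity)]
    exact lt_of_le_of_lt (tailb y hy) ENNReal.ofReal_lt_top
  refine ⟨int1, ?_⟩
  intro r hr
  have psi_eq : ∀ y : ℝ, 0 < y → ∫ x in Ioi y, x⁻¹ ^ 2 ∂μ =
      (∫⁻ x in Ioi y, ENNReal.ofReal (x⁻¹ ^ 2) ∂μ).toReal := fun y hy =>
    integral_eq_lintegral_of_nonneg_ae (Eventually.of_forall fun x => by positivity)
      hmeas.aestronglyMeasurable
  have psi_le : ∀ y : ℝ, 0 < y → ∫ x in Ioi y, x⁻¹ ^ 2 ∂μ ≤ D * y ^ (-γ) := by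
    intro y hy
    rw [psi_eq y hy]
    calc (∫⁻ x in Ioi y, ENNReal.ofReal (x⁻¹ ^ 2) ∂μ).toReal
        ≤ (ENNReal.ofReal (D * y ^ (-γ))).toReal :=
          ENNReal.toReal_mono ENNReal.ofReal_ne_top (tailb y hy)
      _ = D * y ^ (-γ) := ENNReal.toReal_ofReal (by positivity)
  -- the measure gives no mass to (-∞, 0]
  have hIic : μ (Iic (0 : ℝ)) = 0 := by
    have hsub : Iic (0 : ℝ) ⊆ ⋃ n : ℕ, Ioc (-(n + 1) : ℝ) 0 := by
      intro x hx
      obtain ⟨n, hn⟩ := exists_nat_gt (-x)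
      exact mem_iUnion.2 ⟨n, by simp only [mem_Ioc]; constructor <;>
        [linarith [hn]; exact hx]⟩
    refine le_antisymm (le_trans (measure_mono hsub)
      (le_trans (measure_iUnion_le _) ?_)) zero_le
    have hz : ∀ n : ℕ, μ (Ioc (-(n + 1) : ℝ) 0) = 0 := by
      intro n
      rw [hμ, h.measure_Ioc, hzero 0 le_rfl, hzero _ (by push_cast; linarith [Nat.cast_nonneg (α := ℝ) n])]
      simp
    rw [tsum_congr hz]
    simp
  have hres : μ.restrict (Ioi (0 : ℝ)) = μ := by
    apply Measure.restrict_eq_self_of_ae_mem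
    rw [ae_iff]
    convert hIic using 2
    ext x; simp [not_lt]
  -- the target integrand and its value
  have hr2 : 0 < r / 2 := by positivity
  have hintS := hint (r / 2) hr2
  have Sint : IntegrableOn (fun x : ℝ => Real.sin (r / 2 * x) ^ 2 / x ^ 2) (Ioi 0) μ := by
    by_contra hc
    rw [integral_undef hc] at hintS
    have : 0 < K₀ * (r / 2) ^ γ := mul_pos hK₀ (Real.rpow_pos_of_pos hr2 γ)
    linarith
  have TfeqOn : EqOn (fun x : ℝ => x⁻¹ ^ 2 * ((1 - Real.cos (r * x)) / r))
      (fun x : ℝ => (2 / r) * (Real.sin (r / 2 * x) ^ 2 / x ^ 2)) (Ioi 0) := by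
    intro x hx
    have hx0 : (0 : ℝ) < x := hx
    set s := Real.sin (r / 2 * x) with hs
    have hcos : Real.cos (r * x) = 1 - 2 * s ^ 2 := by
      rw [show r * x = 2 * (r / 2 * x) by ring, Real.cos_two_mul, Real.cos_sq', hs]
      ring
    simp only
    rw [hcos, show (1 - (1 - 2 * s ^ 2)) = 2 * s ^ 2 from by ring, inv_pow]
    field_simp
    rw [show x * r / 2 = r / 2 * x by ring, ← hs]
  have Tf_int : IntegrableOn (fun x : ℝ => x⁻¹ ^ 2 * ((1 - Real.cos (r * x)) / r)) (Ioi 0) μ :=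
    IntegrableOn.congr_fun (Sint.const_mul (2 / r)) TfeqOn.symm measurableSet_Ioi
  have Tval : ∫ x in Ioi (0 : ℝ), x⁻¹ ^ 2 * ((1 - Real.cos (r * x)) / r) ∂μ
      = (2 / r) * (K₀ * (r / 2) ^ γ) := by
    rw [setIntegral_congr_fun measurableSet_Ioi TfeqOn, integral_const_mul, hintS]
  -- Fubini computation of the truncated transform
  have key : ∀ a : ℝ, 0 < a →
      ((∫ y in (0 : ℝ)..a, Real.sin (r * y) * ∫ x in Ioi y, x⁻¹ ^ 2 ∂μ)
        = ∫ x in Ioi (0 : ℝ), x⁻¹ ^ 2 * ((1 - Real.cos (r * min a x)) / r) ∂μ) ∧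
      IntegrableOn (fun x : ℝ => x⁻¹ ^ 2 * ((1 - Real.cos (r * min a x)) / r)) (Ioi 0) μ := by
    intro a ha
    set F : ℝ → ℝ → ℝ := fun y x =>
      {q : ℝ × ℝ | q.1 < q.2}.indicator (fun q => Real.sin (r * q.1) * (q.2⁻¹ ^ 2)) (y, x)
      with hF
    have hFcurry : ∀ y : ℝ, F y
        = (Ioi y).indicator (fun x => Real.sin (r * y) * (x⁻¹ ^ 2)) := by
      intro y; funext x
      by_cases hyx : y < x
      · rw [hF]
        simp only
        rw [indicator_of_mem (show ((y, x) : ℝ × ℝ) ∈ {q : ℝ × ℝ | q.1 < q.2} from hyx),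
          indicator_of_mem (mem_Ioi.2 hyx)]
      · rw [hF]
        simp only
        rw [indicator_of_notMem (show ((y, x) : ℝ × ℝ) ∉ {q : ℝ × ℝ | q.1 < q.2} from hyx),
          indicator_of_notMem (fun hc => hyx (mem_Ioi.1 hc))]
    have hFswap : ∀ x : ℝ, (fun y => F y x)
        = (Iio x).indicator (fun y => Real.sin (r * y) * (x⁻¹ ^ 2)) := by
      intro x; funext y
      by_cases hyx : y < x
      · rw [hF]
        simp only
        rw [indicator_of_mem (show ((y, x) : ℝ × ℝ) ∈ {q : ℝ × ℝ | q.1 < q.2} from hyx),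
          indicator_of_mem (mem_Iio.2 hyx)]
      · rw [hF]
        simp only
        rw [indicator_of_notMem (show ((y, x) : ℝ × ℝ) ∉ {q : ℝ × ℝ | q.1 < q.2} from hyx),
          indicator_of_notMem (fun hc => hyx (mem_Iio.1 hc))]
    have hFmeas : Measurable (Function.uncurry F) := by
      have e : Function.uncurry F = {q : ℝ × ℝ | q.1 < q.2}.indicator
          (fun q => Real.sin (r * q.1) * (q.2⁻¹ ^ 2)) := by
        funext p
        simp only [Function.uncurry, hF, Prod.mk.eta]
      rw [e]
      exact Measurable.indicator
        ((Real.measurable_sin.comp (measurable_const.mul measurable_fst)).mul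
          (measurable_snd.inv.pow_const 2))
        (measurableSet_lt measurable_fst measurable_snd)
    have hFint : Integrable (Function.uncurry F)
        ((volume.restrict (Ioc (0 : ℝ) a)).prod μ) := by
      refine ⟨hFmeas.aestronglyMeasurable, ?_⟩
      rw [hasFiniteIntegral_iff_norm]
      rw [lintegral_prod _ (hFmeas.norm.ennreal_ofReal.aemeasurable)]
      have inner_le : ∀ᵐ y ∂(volume.restrict (Ioc (0 : ℝ) a)),
          (∫⁻ x, ENNReal.ofReal ‖F y x‖ ∂μ)
            ≤ ENNReal.ofReal ((r * D) * y ^ (1 - γ)) := by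
        filter_upwards [ae_restrict_mem measurableSet_Ioc] with y hy
        have hy0 : 0 < y := hy.1
        have step1 : ∀ x : ℝ, ENNReal.ofReal ‖F y x‖
            ≤ (Ioi y).indicator
              (fun x => ENNReal.ofReal (r * y) * ENNReal.ofReal (x⁻¹ ^ 2)) x := by
          intro x
          have := congrFun (hFcurry y) x
          by_cases hyx : y < x
          · rw [indicator_of_mem (mem_Ioi.2 hyx)]
            rw [this, indicator_of_mem (mem_Ioi.2 hyx)]
            rw [← ENNReal.ofReal_mul (by positivity)]
            apply ENNReal.ofReal_le_ofReal
            rw [norm_mul, Real.norm_eq_abs, Real.norm_eq_abs]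
            have h1 : |Real.sin (r * y)| ≤ r * y := by
              calc |Real.sin (r * y)| ≤ |r * y| := Real.abs_sin_le_abs
                _ = r * y := abs_of_pos (by positivity)
            have h2 : |x⁻¹ ^ 2| = x⁻¹ ^ 2 := abs_of_nonneg (by positivity)
            rw [h2]
            exact mul_le_mul_of_nonneg_right h1 (by positivity)
          · rw [this, indicator_of_notMem (fun hc => hyx (mem_Ioi.1 hc)),
              indicator_of_notMem (fun hc => hyx (mem_Ioi.1 hc))]
            simp
        calc ∫⁻ x, ENNReal.ofReal ‖F y x‖ ∂μ
            ≤ ∫⁻ x, (Ioi y).indicator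
                (fun x => ENNReal.ofReal (r * y) * ENNReal.ofReal (x⁻¹ ^ 2)) x ∂μ :=
              lintegral_mono step1
          _ = ENNReal.ofReal (r * y) * ∫⁻ x in Ioi y, ENNReal.ofReal (x⁻¹ ^ 2) ∂μ := by
              rw [lintegral_indicator measurableSet_Ioi,
                lintegral_const_mul _ hmeas.ennreal_ofReal]
          _ ≤ ENNReal.ofReal (r * y) * ENNReal.ofReal (D * y ^ (-γ)) := by
              gcongr
              exact tailb y hy0
          _ = ENNReal.ofReal ((r * D) * y ^ (1 - γ)) := by
              rw [← ENNReal.ofReal_mul (by positivity)]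
              congr 1
              have : y ^ (1 - γ) = y * y ^ (-γ) := by
                rw [show (1 - γ) = 1 + (-γ) by ring, Real.rpow_add hy0, Real.rpow_one]
              rw [this]; ring
      calc ∫⁻ y, (∫⁻ x, ENNReal.ofReal ‖F y x‖ ∂μ) ∂(volume.restrict (Ioc (0 : ℝ) a))
          ≤ ∫⁻ y, ENNReal.ofReal ((r * D) * y ^ (1 - γ))
              ∂(volume.restrict (Ioc (0 : ℝ) a)) := lintegral_mono_ae inner_le
        _ < ⊤ := by
            have hii : IntegrableOn (fun y : ℝ => (r * D) * y ^ (1 - γ)) (Ioc 0 a) volume := by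
              rw [← intervalIntegrable_iff_integrableOn_Ioc_of_le ha.le]
              exact (intervalIntegral.intervalIntegrable_rpow' (by linarith)).const_mul _
            have hfin := (hasFiniteIntegral_iff_norm _).1 hii.2
            refine lt_of_le_of_lt (lintegral_mono fun y => ?_) hfin
            apply ENNReal.ofReal_le_ofReal
            rw [Real.norm_eq_abs]
            exact le_abs_self _
    have swap := integral_integral_swap hFint
    have lhs_eq : (∫ y in Ioc (0 : ℝ) a, (∫ x, F y x ∂μ))
        = ∫ y in Ioc (0 : ℝ) a, Real.sin (r * y) * ∫ x in Ioi y, x⁻¹ ^ 2 ∂μ := by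
      apply integral_congr_ae
      apply Eventually.of_forall
      intro y
      show (∫ x, F y x ∂μ) = _
      rw [hFcurry y, integral_indicator measurableSet_Ioi, integral_const_mul]
    have geq : EqOn (fun x => ∫ y in Ioc (0 : ℝ) a, F y x)
        (fun x => x⁻¹ ^ 2 * ((1 - Real.cos (r * min a x)) / r)) (Ioi 0) := by
      intro x hx
      have hx0 : (0 : ℝ) < x := hx
      show (∫ y in Ioc (0 : ℝ) a, F y x) = _
      rw [hFswap x]
      exact psi_aux_inner r a x hr ha hx0
    have gint : Integrable (fun x => ∫ y in Ioc (0 : ℝ) a, F y x) μ :=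
      hFint.integral_prod_right
    have Gint : IntegrableOn
        (fun x => x⁻¹ ^ 2 * ((1 - Real.cos (r * min a x)) / r)) (Ioi 0) μ :=
      gint.integrableOn.congr_fun geq measurableSet_Ioi
    refine ⟨?_, Gint⟩
    rw [intervalIntegral.integral_of_le ha.le, ← lhs_eq, swap]
    calc (∫ x, (∫ y in Ioc (0 : ℝ) a, F y x) ∂μ)
        = ∫ x in Ioi (0 : ℝ), (∫ y in Ioc (0 : ℝ) a, F y x) ∂μ := by
          conv_lhs => rw [← hres]
      _ = ∫ x in Ioi (0 : ℝ), x⁻¹ ^ 2 * ((1 - Real.cos (r * min a x)) / r) ∂μ :=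
          setIntegral_congr_fun measurableSet_Ioi geq
  -- the quantitative difference bound
  have diff_bound : ∀ a : ℝ, 1 ≤ a →
      |(∫ x in Ioi (0 : ℝ), x⁻¹ ^ 2 * ((1 - Real.cos (r * min a x)) / r) ∂μ)
          - (2 / r) * (K₀ * (r / 2) ^ γ)| ≤ (2 / r) * (D * a ^ (-γ)) := by
    intro a ha1
    have ha : (0 : ℝ) < a := lt_of_lt_of_le one_pos ha1
    have Gint := (key a ha).2
    rw [← Tval, ← integral_sub Gint Tf_int]
    have hsplit : Ioc (0 : ℝ) a ∪ Ioi a = Ioi 0 := Ioc_union_Ioi_eq_Ioi ha.le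
    have hint_sub : IntegrableOn (fun x : ℝ =>
        x⁻¹ ^ 2 * ((1 - Real.cos (r * min a x)) / r)
          - x⁻¹ ^ 2 * ((1 - Real.cos (r * x)) / r)) (Ioi 0) μ := Gint.sub Tf_int
    have e0 : ∫ x in Ioi (0 : ℝ), (x⁻¹ ^ 2 * ((1 - Real.cos (r * min a x)) / r)
          - x⁻¹ ^ 2 * ((1 - Real.cos (r * x)) / r)) ∂μ
        = ∫ x in Ioi a, (x⁻¹ ^ 2 * ((1 - Real.cos (r * min a x)) / r)
          - x⁻¹ ^ 2 * ((1 - Real.cos (r * x)) / r)) ∂μ := by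
      rw [← hsplit, setIntegral_union (Ioc_disjoint_Ioi le_rfl) measurableSet_Ioi
        (hint_sub.mono_set (hsplit ▸ subset_union_left))
        (hint_sub.mono_set (hsplit ▸ subset_union_right))]
      have hzero' : ∫ x in Ioc (0 : ℝ) a, (x⁻¹ ^ 2 * ((1 - Real.cos (r * min a x)) / r)
          - x⁻¹ ^ 2 * ((1 - Real.cos (r * x)) / r)) ∂μ = 0 := by
        rw [setIntegral_congr_fun (g := fun _ => (0 : ℝ)) measurableSet_Ioc
          (fun x hx => by rw [min_eq_right hx.2]; ring)]
        exact integral_zero _ _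
      rw [hzero', zero_add]
    rw [e0]
    have habs : ∀ x ∈ Ioi a, |x⁻¹ ^ 2 * ((1 - Real.cos (r * min a x)) / r)
          - x⁻¹ ^ 2 * ((1 - Real.cos (r * x)) / r)| ≤ (2 / r) * (x⁻¹ ^ 2) := by
      intro x hx
      have hx0 : 0 < x := lt_trans ha hx
      rw [min_eq_left (le_of_lt hx)]
      have e1 : x⁻¹ ^ 2 * ((1 - Real.cos (r * a)) / r) - x⁻¹ ^ 2 * ((1 - Real.cos (r * x)) / r)
          = x⁻¹ ^ 2 * ((Real.cos (r * x) - Real.cos (r * a)) / r) := by ring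
      rw [e1, abs_mul, abs_of_nonneg (show (0 : ℝ) ≤ x⁻¹ ^ 2 by positivity)]
      have e2 : |(Real.cos (r * x) - Real.cos (r * a)) / r| ≤ 2 / r := by
        rw [abs_div, abs_of_pos hr]
        gcongr
        calc |Real.cos (r * x) - Real.cos (r * a)|
            ≤ |Real.cos (r * x)| + |Real.cos (r * a)| := abs_sub _ _
          _ ≤ 2 := by linarith [Real.abs_cos_le_one (r * x), Real.abs_cos_le_one (r * a)]
      calc x⁻¹ ^ 2 * |(Real.cos (r * x) - Real.cos (r * a)) / r|
          ≤ x⁻¹ ^ 2 * (2 / r) := by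
            apply mul_le_mul_of_nonneg_left e2 (by positivity)
        _ = (2 / r) * (x⁻¹ ^ 2) := by ring
    calc |∫ x in Ioi a, (x⁻¹ ^ 2 * ((1 - Real.cos (r * min a x)) / r)
            - x⁻¹ ^ 2 * ((1 - Real.cos (r * x)) / r)) ∂μ|
        ≤ ∫ x in Ioi a, |x⁻¹ ^ 2 * ((1 - Real.cos (r * min a x)) / r)
            - x⁻¹ ^ 2 * ((1 - Real.cos (r * x)) / r)| ∂μ := by
          have hni := norm_integral_le_integral_norm (μ := μ.restrict (Ioi a))
            (fun x : ℝ => x⁻¹ ^ 2 * ((1 - Real.cos (r * min a x)) / r)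
              - x⁻¹ ^ 2 * ((1 - Real.cos (r * x)) / r))
          simp only [Real.norm_eq_abs] at hni
          exact hni
      _ ≤ ∫ x in Ioi a, (2 / r) * (x⁻¹ ^ 2) ∂μ := by
          apply setIntegral_mono_on
          · exact (hint_sub.mono_set (Ioi_subset_Ioi ha.le)).abs
          · exact (int1 a ha).const_mul _
          · exact measurableSet_Ioi
          · exact habs
      _ = (2 / r) * ∫ x in Ioi a, x⁻¹ ^ 2 ∂μ := integral_const_mul _ _
      _ ≤ (2 / r) * (D * a ^ (-γ)) :=
          mul_le_mul_of_nonneg_left (psi_le a ha) (by positivity)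
  -- conclusion
  have lim0 : Tendsto (fun a : ℝ => (2 / r) * (D * a ^ (-γ))) atTop (𝓝 0) := by
    have h1 := tendsto_rpow_neg_atTop hγ0
    have h2 := (h1.const_mul D).const_mul (2 / r)
    simpa using h2
  have main : Tendsto (fun a : ℝ =>
      ∫ x in Ioi (0 : ℝ), x⁻¹ ^ 2 * ((1 - Real.cos (r * min a x)) / r) ∂μ) atTop
      (𝓝 ((2 / r) * (K₀ * (r / 2) ^ γ))) := by
    rw [← tendsto_sub_nhds_zero_iff]
    apply squeeze_zero_norm' ?_ lim0
    filter_upwards [eventually_ge_atTop (1 : ℝ)] with a ha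
    simpa [Real.norm_eq_abs] using diff_bound a ha
  have feq : (fun a : ℝ => ∫ y in (0 : ℝ)..a, Real.sin (r * y) * ∫ x in Ioi y, x⁻¹ ^ 2 ∂μ)
      =ᶠ[atTop] (fun a : ℝ =>
        ∫ x in Ioi (0 : ℝ), x⁻¹ ^ 2 * ((1 - Real.cos (r * min a x)) / r) ∂μ) := by
    filter_upwards [eventually_gt_atTop (0 : ℝ)] with a ha
    exact (key a ha).1
  have Teq : (2 / r) * (K₀ * (r / 2) ^ γ) = (r / 2) ^ (γ - 1) * K₀ := by
    rw [Real.rpow_sub hr2, Real.rpow_one]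
    field_simp
  rw [← Teq]
  exact Tendsto.congr' feq.symm main
end

section
/- Let γ ∈ (0,2), C > 0, and let ψ : (0,∞) → [0,∞) be nonincreasing with ψ(y) ≤ C·y^{−γ} for all y > 0. Then there exists a constant C' > 0, depending only on C and γ, such that for all a > 0 and all t > 0, |∫_0^a sin(ty)·ψ(y) dy| ≤ C'·t^{γ−1}. -/
open MeasureTheory Filter Set Topology Real intervalIntegral

-- ψ integrable on intervals away from 0
lemma psi_intInt {ψ : ℝ → ℝ} (hanti : AntitoneOn ψ (Ioi 0)) (hpos : ∀ y : ℝ, 0 < y → 0 ≤ ψ y)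
    {b c : ℝ} (hb : 0 < b) (hbc : b ≤ c) :
    IntervalIntegrable ψ MeasureTheory.volume b c := by
  rw [intervalIntegrable_iff_integrableOn_Ioc_of_le hbc]
  have hsub : Ioc b c ⊆ Ioi 0 := fun x hx => lt_trans hb hx.1
  have hmeas : AEMeasurable ψ (volume.restrict (Ioc b c)) :=
    aemeasurable_restrict_of_antitoneOn measurableSet_Ioc (hanti.mono hsub)
  refine Integrable.mono' (g := fun _ => ψ b) (integrableOn_const measure_Ioc_lt_top.ne)
    hmeas.aestronglyMeasurable ?_
  filter_upwards [ae_restrict_mem measurableSet_Ioc] with x hx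
  rw [Real.norm_eq_abs, abs_of_nonneg (hpos x (hsub hx))]
  exact hanti hb (hsub hx) hx.1.le

-- sin(ty)ψ(y) integrable away from 0
lemma f_intInt {ψ : ℝ → ℝ} (hanti : AntitoneOn ψ (Ioi 0)) (hpos : ∀ y : ℝ, 0 < y → 0 ≤ ψ y)
    (t : ℝ) {b c : ℝ} (hb : 0 < b) (hbc : b ≤ c) :
    IntervalIntegrable (fun y => Real.sin (t * y) * ψ y) MeasureTheory.volume b c := by
  rw [intervalIntegrable_iff_integrableOn_Ioc_of_le hbc]
  have hsub : Ioc b c ⊆ Ioi 0 := fun x hx => lt_trans hb hx.1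
  have hmeas : AEMeasurable ψ (volume.restrict (Ioc b c)) :=
    aemeasurable_restrict_of_antitoneOn measurableSet_Ioc (hanti.mono hsub)
  have hpsi : IntegrableOn ψ (Ioc b c) volume := by
    rw [← intervalIntegrable_iff_integrableOn_Ioc_of_le hbc]
    exact psi_intInt hanti hpos hb hbc
  refine Integrable.mono' (g := ψ) hpsi
    (((Real.measurable_sin.comp (measurable_const_mul t)).aemeasurable.mul hmeas).aestronglyMeasurable) ?_
  filter_upwards [ae_restrict_mem measurableSet_Ioc] with x hx
  rw [Real.norm_eq_abs, abs_mul]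
  calc |Real.sin (t * x)| * |ψ x| ≤ 1 * |ψ x| :=
        mul_le_mul_of_nonneg_right (Real.abs_sin_le_one _) (abs_nonneg _)
    _ = ψ x := by rw [one_mul, abs_of_nonneg (hpos x (hsub hx))]

-- sin(ty)ψ(y) integrable near 0
lemma f_intInt0 {γ C : ℝ} (hγ : γ ∈ Ioo (0 : ℝ) 2) {ψ : ℝ → ℝ}
    (hanti : AntitoneOn ψ (Ioi 0)) (hpos : ∀ y : ℝ, 0 < y → 0 ≤ ψ y)
    (hbnd : ∀ y : ℝ, 0 < y → ψ y ≤ C * y ^ (-γ)) {t c : ℝ} (ht : 0 < t) (hc : 0 < c) :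
    IntervalIntegrable (fun y => Real.sin (t * y) * ψ y) MeasureTheory.volume 0 c := by
  rw [intervalIntegrable_iff_integrableOn_Ioc_of_le hc.le]
  have hsub : Ioc (0:ℝ) c ⊆ Ioi 0 := fun x hx => hx.1
  have hmeas : AEMeasurable ψ (volume.restrict (Ioc (0:ℝ) c)) :=
    aemeasurable_restrict_of_antitoneOn measurableSet_Ioc (hanti.mono hsub)
  have hgint : IntegrableOn (fun y : ℝ => C * t * y ^ (1 - γ)) (Ioc (0:ℝ) c) volume := by
    rw [← intervalIntegrable_iff_integrableOn_Ioc_of_le hc.le]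
    exact (intervalIntegrable_rpow' (by linarith [hγ.2] : (-1:ℝ) < 1 - γ)).const_mul _
  refine Integrable.mono' hgint
    (((Real.measurable_sin.comp (measurable_const_mul t)).aemeasurable.mul hmeas).aestronglyMeasurable) ?_
  filter_upwards [ae_restrict_mem measurableSet_Ioc] with x hx
  have hx0 : 0 < x := hx.1
  rw [Real.norm_eq_abs, abs_mul, abs_of_nonneg (hpos x hx0)]
  calc |Real.sin (t * x)| * ψ x ≤ (t * x) * (C * x ^ (-γ)) := by
        refine mul_le_mul ?_ (hbnd x hx0) (hpos x hx0) (by positivity)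
        calc |Real.sin (t * x)| ≤ |t * x| := Real.abs_sin_le_abs
          _ = t * x := abs_of_nonneg (by positivity)
    _ = C * t * (x * x ^ (-γ)) := by ring
    _ = C * t * x ^ (1 - γ) := by
        rw [show (1:ℝ) - γ = 1 + (-γ) by ring, Real.rpow_add hx0, Real.rpow_one]

-- bound near 0
lemma bound0 {γ C : ℝ} (hγ : γ ∈ Ioo (0 : ℝ) 2) (hC : 0 < C) {ψ : ℝ → ℝ}
    (hpos : ∀ y : ℝ, 0 < y → 0 ≤ ψ y)
    (hbnd : ∀ y : ℝ, 0 < y → ψ y ≤ C * y ^ (-γ)) {t c : ℝ} (ht : 0 < t) (hc : 0 < c) :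
    |∫ y in (0:ℝ)..c, Real.sin (t * y) * ψ y| ≤ C * t * c ^ (2 - γ) / (2 - γ) := by
  have h2γ : 0 < 2 - γ := by linarith [hγ.2]
  have hgi : IntervalIntegrable (fun y : ℝ => C * t * y ^ (1 - γ)) MeasureTheory.volume 0 c :=
    (intervalIntegrable_rpow' (by linarith [hγ.2] : (-1:ℝ) < 1 - γ)).const_mul _
  have hb : ∀ᵐ x ∂(volume.restrict (uIoc (0:ℝ) c)), ‖Real.sin (t * x) * ψ x‖ ≤ C * t * x ^ (1 - γ) := by
    rw [uIoc_of_le hc.le]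
    filter_upwards [ae_restrict_mem measurableSet_Ioc] with x hx
    have hx0 : 0 < x := hx.1
    rw [Real.norm_eq_abs, abs_mul, abs_of_nonneg (hpos x hx0)]
    calc |Real.sin (t * x)| * ψ x ≤ (t * x) * (C * x ^ (-γ)) := by
          refine mul_le_mul ?_ (hbnd x hx0) (hpos x hx0) (by positivity)
          calc |Real.sin (t * x)| ≤ |t * x| := Real.abs_sin_le_abs
            _ = t * x := abs_of_nonneg (by positivity)
      _ = C * t * (x * x ^ (-γ)) := by ring
      _ = C * t * x ^ (1 - γ) := by
          rw [show (1:ℝ) - γ = 1 + (-γ) by ring, Real.rpow_add hx0, Real.rpow_one]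
  have key := intervalIntegral.norm_integral_le_abs_of_norm_le hb hgi
  rw [Real.norm_eq_abs] at key
  refine key.trans ?_
  have hval : (∫ y in (0:ℝ)..c, C * t * y ^ (1 - γ)) = C * t * c ^ (2 - γ) / (2 - γ) := by
    rw [intervalIntegral.integral_const_mul,
      integral_rpow (Or.inl (by linarith [hγ.2] : (-1:ℝ) < 1 - γ)),
      Real.zero_rpow (by intro h; rw [show (1:ℝ) - γ + 1 = 2 - γ by ring] at h; linarith),
      show (1:ℝ) - γ + 1 = 2 - γ by ring]
    ring
  rw [hval, abs_of_nonneg (by positivity)]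

lemma psi_intInt' {ψ : ℝ → ℝ} (hanti : AntitoneOn ψ (Ioi 0)) (hpos : ∀ y : ℝ, 0 < y → 0 ≤ ψ y)
    {b c : ℝ} (hb : 0 < b) (hc : 0 < c) :
    IntervalIntegrable ψ MeasureTheory.volume b c := by
  rcases le_total b c with h | h
  · exact psi_intInt hanti hpos hb h
  · exact (psi_intInt hanti hpos hc h).symm

lemma osc {ψ : ℝ → ℝ} (hanti : AntitoneOn ψ (Ioi 0)) (hpos : ∀ y : ℝ, 0 < y → 0 ≤ ψ y)
    {t b a : ℝ} (ht : 0 < t) (hb : 0 < b) (hba : b ≤ a) :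
    |∫ y in b..a, Real.sin (t * y) * ψ y| ≤ 3 * (π / t) * ψ b := by
  set δ := π / t with hδdef
  have hδ : 0 < δ := div_pos Real.pi_pos ht
  have hψb : 0 ≤ ψ b := hpos b hb
  set f : ℝ → ℝ := fun y => Real.sin (t * y) * ψ y with hf
  by_cases hcase : a ≤ b + δ
  · have h1 : |∫ y in b..a, f y| ≤ ψ b * |a - b| := by
      rw [← Real.norm_eq_abs (∫ y in b..a, f y)]
      refine intervalIntegral.norm_integral_le_of_norm_le_const ?_
      intro x hx
      rw [uIoc_of_le hba] at hx
      have hx0 : (0:ℝ) < x := lt_trans hb hx.1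
      rw [Real.norm_eq_abs, hf, abs_mul, abs_of_nonneg (hpos x hx0)]
      calc |Real.sin (t * x)| * ψ x ≤ 1 * ψ x :=
            mul_le_mul_of_nonneg_right (Real.abs_sin_le_one _) (hpos x hx0)
        _ = ψ x := one_mul _
        _ ≤ ψ b := hanti hb hx0 hx.1.le
    refine h1.trans ?_
    rw [abs_of_nonneg (by linarith)]
    nlinarith
  · push_neg at hcase
    have hbδ : 0 < b + δ := by linarith
    have hf1 : IntervalIntegrable f MeasureTheory.volume b (b + δ) :=
      f_intInt hanti hpos t hb (by linarith)
    have hf2 : IntervalIntegrable f MeasureTheory.volume (b + δ) a :=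
      f_intInt hanti hpos t hbδ hcase.le
    have hfall : IntervalIntegrable f MeasureTheory.volume b a := hf1.trans hf2
    have hh : IntervalIntegrable (fun y => f (y - δ)) MeasureTheory.volume (b + δ) (a + δ) :=
      hfall.comp_sub_right δ
    have hh1 : IntervalIntegrable (fun y => f (y - δ)) MeasureTheory.volume (b + δ) a := by
      refine hh.mono_set ?_
      rw [uIcc_of_le hcase.le, uIcc_of_le (by linarith)]
      exact Icc_subset_Icc le_rfl (by linarith)
    have hh2 : IntervalIntegrable (fun y => f (y - δ)) MeasureTheory.volume a (a + δ) := by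
      refine hh.mono_set ?_
      rw [uIcc_of_le (by linarith : a ≤ a + δ), uIcc_of_le (by linarith)]
      exact Icc_subset_Icc (by linarith) le_rfl
    have key : (∫ y in (b + δ)..(a + δ), f (y - δ)) = ∫ y in b..a, f y := by
      rw [intervalIntegral.integral_comp_sub_right]
      norm_num
    have split1 : (∫ y in b..a, f y) = (∫ y in b..(b + δ), f y) + ∫ y in (b + δ)..a, f y :=
      (intervalIntegral.integral_add_adjacent_intervals hf1 hf2).symm
    have split2 : (∫ y in (b + δ)..(a + δ), f (y - δ)) =
        (∫ y in (b + δ)..a, f (y - δ)) + ∫ y in a..(a + δ), f (y - δ) :=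
      (intervalIntegral.integral_add_adjacent_intervals hh1 hh2).symm
    have combine : 2 * ∫ y in b..a, f y =
        (∫ y in b..(b + δ), f y) + (∫ y in (b + δ)..a, (f y + f (y - δ)))
          + ∫ y in a..(a + δ), f (y - δ) := by
      rw [intervalIntegral.integral_add hf2 hh1]
      linarith [split1, split2, key]
    -- bound the three pieces
    have hA : |∫ y in b..(b + δ), f y| ≤ ψ b * δ := by
      have h1 : |∫ y in b..(b + δ), f y| ≤ ψ b * |b + δ - b| := by
        rw [← Real.norm_eq_abs (∫ y in b..(b + δ), f y)]
        refine intervalIntegral.norm_integral_le_of_norm_le_const ?_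
        intro x hx
        rw [uIoc_of_le (by linarith : b ≤ b + δ)] at hx
        have hx0 : (0:ℝ) < x := lt_trans hb hx.1
        rw [Real.norm_eq_abs, hf, abs_mul, abs_of_nonneg (hpos x hx0)]
        calc |Real.sin (t * x)| * ψ x ≤ 1 * ψ x :=
              mul_le_mul_of_nonneg_right (Real.abs_sin_le_one _) (hpos x hx0)
          _ = ψ x := one_mul _
          _ ≤ ψ b := hanti hb hx0 hx.1.le
      simpa using h1.trans_eq (by rw [abs_of_nonneg (by linarith : (0:ℝ) ≤ b + δ - b)]; ring_nf)
    have hZ : |∫ y in a..(a + δ), f (y - δ)| ≤ ψ b * δ := by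
      have h1 : |∫ y in a..(a + δ), f (y - δ)| ≤ ψ b * |a + δ - a| := by
        rw [← Real.norm_eq_abs (∫ y in a..(a + δ), f (y - δ))]
        refine intervalIntegral.norm_integral_le_of_norm_le_const ?_
        intro x hx
        rw [uIoc_of_le (by linarith : a ≤ a + δ)] at hx
        have hxb : b < x - δ := by linarith [hx.1]
        have hx0 : (0:ℝ) < x - δ := lt_trans hb hxb
        rw [Real.norm_eq_abs, hf, abs_mul, abs_of_nonneg (hpos _ hx0)]
        calc |Real.sin (t * (x - δ))| * ψ (x - δ) ≤ 1 * ψ (x - δ) :=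
              mul_le_mul_of_nonneg_right (Real.abs_sin_le_one _) (hpos _ hx0)
          _ = ψ (x - δ) := one_mul _
          _ ≤ ψ b := hanti hb hx0 hxb.le
      simpa using h1.trans_eq (by rw [abs_of_nonneg (by linarith : (0:ℝ) ≤ a + δ - a)]; ring_nf)
    have hB : |∫ y in (b + δ)..a, (f y + f (y - δ))| ≤ ψ b * δ := by
      have hg1 : IntervalIntegrable (fun y => ψ (y - δ)) MeasureTheory.volume (b + δ) a := by
        have := (psi_intInt hanti hpos hb (by linarith : b ≤ a - δ)).comp_sub_right δ
        rwa [sub_add_cancel] at this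
      have hg2 : IntervalIntegrable ψ MeasureTheory.volume (b + δ) a :=
        psi_intInt hanti hpos hbδ hcase.le
      have hgint : IntervalIntegrable (fun y => ψ (y - δ) - ψ y) MeasureTheory.volume (b + δ) a :=
        hg1.sub hg2
      have hbnd : ∀ᵐ x ∂(volume.restrict (uIoc (b + δ) a)),
          ‖f x + f (x - δ)‖ ≤ ψ (x - δ) - ψ x := by
        rw [uIoc_of_le hcase.le]
        filter_upwards [ae_restrict_mem measurableSet_Ioc] with x hx
        have hxb : b < x - δ := by linarith [hx.1]
        have hx0 : (0:ℝ) < x - δ := lt_trans hb hxb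
        have hx0' : (0:ℝ) < x := by linarith
        have hsin : Real.sin (t * (x - δ)) = - Real.sin (t * x) := by
          have ht' : t * (x - δ) = t * x - π := by
            rw [hδdef]; field_simp
          rw [ht', Real.sin_sub_pi]
        have hrw : f x + f (x - δ) = Real.sin (t * x) * (ψ x - ψ (x - δ)) := by
          simp only [hf, hsin]; ring
        rw [hrw, Real.norm_eq_abs, abs_mul]
        have hmono : ψ x ≤ ψ (x - δ) := hanti hx0 hx0' (by linarith)
        have habs : |ψ x - ψ (x - δ)| = ψ (x - δ) - ψ x := by
          rw [abs_sub_comm, abs_of_nonneg (by linarith)]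
        calc |Real.sin (t * x)| * |ψ x - ψ (x - δ)| ≤ 1 * |ψ x - ψ (x - δ)| :=
              mul_le_mul_of_nonneg_right (Real.abs_sin_le_one _) (abs_nonneg _)
          _ = ψ (x - δ) - ψ x := by rw [one_mul, habs]
      have h1 := intervalIntegral.norm_integral_le_abs_of_norm_le hbnd hgint
      rw [Real.norm_eq_abs] at h1
      refine h1.trans ?_
      -- compute / bound ∫ (ψ(y-δ) - ψ y)
      have hP1 : IntervalIntegrable ψ MeasureTheory.volume b (b + δ) :=
        psi_intInt hanti hpos hb (by linarith)
      have hP2 : IntervalIntegrable ψ MeasureTheory.volume (b + δ) (a - δ) :=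
        psi_intInt' hanti hpos hbδ (by linarith)
      have hP3 : IntervalIntegrable ψ MeasureTheory.volume (a - δ) a :=
        psi_intInt hanti hpos (by linarith) (by linarith)
      have hadj1 : (∫ y in b..(b + δ), ψ y) + (∫ y in (b + δ)..(a - δ), ψ y)
          = ∫ y in b..(a - δ), ψ y :=
        intervalIntegral.integral_add_adjacent_intervals hP1 hP2
      have hadj2 : (∫ y in (b + δ)..(a - δ), ψ y) + (∫ y in (a - δ)..a, ψ y)
          = ∫ y in (b + δ)..a, ψ y :=
        intervalIntegral.integral_add_adjacent_intervals hP2 hP3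
      have hshift : (∫ y in (b + δ)..a, ψ (y - δ)) = ∫ y in b..(a - δ), ψ y := by
        rw [intervalIntegral.integral_comp_sub_right]
        norm_num
      have hsplitg : (∫ y in (b + δ)..a, (ψ (y - δ) - ψ y))
          = (∫ y in b..(b + δ), ψ y) - ∫ y in (a - δ)..a, ψ y := by
        rw [intervalIntegral.integral_sub hg1 hg2, hshift]
        linarith [hadj1, hadj2]
      have e1 : (∫ y in b..(b + δ), ψ y) ≤ ψ b * δ := by
        have := intervalIntegral.integral_mono_on (by linarith : b ≤ b + δ) hP1
          intervalIntegrable_const (g := fun _ => ψ b)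
          (fun x hx => hanti hb (lt_of_lt_of_le hb hx.1) hx.1)
        simpa [mul_comm] using this
      have e2 : 0 ≤ ∫ y in (a - δ)..a, ψ y :=
        intervalIntegral.integral_nonneg (by linarith)
          (fun u hu => hpos u (by linarith [hu.1]))
      have e3 : 0 ≤ ∫ y in (b + δ)..a, (ψ (y - δ) - ψ y) :=
        intervalIntegral.integral_nonneg hcase.le (fun u hu => by
          have hub : b ≤ u - δ := by linarith [hu.1]
          exact sub_nonneg.2 (hanti (lt_of_lt_of_le hb hub) (by linarith [hu.1] : (0:ℝ) < u) (by linarith)))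
      rw [abs_of_nonneg e3, hsplitg]
      linarith
    have habs3 : |2 * ∫ y in b..a, f y| ≤ ψ b * δ + ψ b * δ + ψ b * δ := by
      rw [combine]
      calc |(∫ y in b..(b + δ), f y) + (∫ y in (b + δ)..a, (f y + f (y - δ)))
          + ∫ y in a..(a + δ), f (y - δ)|
          ≤ |(∫ y in b..(b + δ), f y) + (∫ y in (b + δ)..a, (f y + f (y - δ)))|
            + |∫ y in a..(a + δ), f (y - δ)| := abs_add_le _ _
        _ ≤ |∫ y in b..(b + δ), f y| + |∫ y in (b + δ)..a, (f y + f (y - δ))|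
            + |∫ y in a..(a + δ), f (y - δ)| := by linarith [abs_add_le (∫ y in b..(b + δ), f y) (∫ y in (b + δ)..a, (f y + f (y - δ)))]
        _ ≤ ψ b * δ + ψ b * δ + ψ b * δ := by linarith
    rw [abs_mul, abs_of_nonneg (by norm_num : (0:ℝ) ≤ 2)] at habs3
    have : |∫ y in b..a, f y| ≤ 3 * δ * ψ b / 2 := by linarith
    refine this.trans ?_
    nlinarith

/-- Uniform bound on truncated sine transforms: if `ψ : (0,∞) → [0,∞)` is
nonincreasing with `ψ(y) ≤ C y^{-γ}`, then `|∫_0^a sin(ty) ψ(y) dy| ≤ C' t^{γ-1}`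
for all `a > 0` and `t > 0`, with `C'` depending only on `C` and `γ`. -/
theorem sine_transform_uniform_bound (γ C : ℝ) (hγ : γ ∈ Ioo (0 : ℝ) 2) (hC : 0 < C) :
    ∃ C' > (0 : ℝ), ∀ ψ : ℝ → ℝ, AntitoneOn ψ (Ioi 0) →
      (∀ y : ℝ, 0 < y → 0 ≤ ψ y) →
      (∀ y : ℝ, 0 < y → ψ y ≤ C * y ^ (-γ)) →
      ∀ a : ℝ, 0 < a → ∀ t : ℝ, 0 < t →
        |∫ y in (0 : ℝ)..a, Real.sin (t * y) * ψ y| ≤ C' * t ^ (γ - 1) := by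

  obtain ⟨hγ0, hγ2⟩ := hγ
  have h2γ : 0 < 2 - γ := by linarith
  have hπ := Real.pi_pos
  refine ⟨C * (1 / (2 - γ) + 3 * π), by positivity, ?_⟩
  intro ψ hanti hpos hbnd a ha t ht
  have hb0 : 0 < 1 / t := by positivity
  have htγ : (0:ℝ) ≤ t ^ (γ - 1) := Real.rpow_nonneg ht.le _
  have hinv : ((1:ℝ) / t) ^ (2 - γ) = t ^ (γ - 2) := by
    rw [one_div, Real.inv_rpow ht.le, ← Real.rpow_neg ht.le, show -(2 - γ) = γ - 2 by ring]
  have keyt : t * t ^ (γ - 2) = t ^ (γ - 1) := by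
    rw [show γ - 1 = 1 + (γ - 2) by ring, Real.rpow_add ht, Real.rpow_one]
  rcases le_or_gt a (1 / t) with hcase | hcase
  · have h1 := bound0 ⟨hγ0, hγ2⟩ hC hpos hbnd ht ha
    refine h1.trans ?_
    have h2 : C * t * a ^ (2 - γ) / (2 - γ) ≤ C * t * (1 / t) ^ (2 - γ) / (2 - γ) := by
      gcongr
    refine h2.trans ?_
    rw [hinv, show C * t * t ^ (γ - 2) = C * (t * t ^ (γ - 2)) by ring, keyt]
    rw [show C * t ^ (γ - 1) / (2 - γ) = (C * (1 / (2 - γ))) * t ^ (γ - 1) by ring]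
    gcongr
    nlinarith
  · have hi1 := f_intInt0 ⟨hγ0, hγ2⟩ hanti hpos hbnd ht hb0
    have hi2 := f_intInt hanti hpos t hb0 hcase.le
    have hsplit : (∫ y in (0:ℝ)..a, Real.sin (t * y) * ψ y)
        = (∫ y in (0:ℝ)..(1 / t), Real.sin (t * y) * ψ y)
          + ∫ y in (1 / t)..a, Real.sin (t * y) * ψ y :=
      (intervalIntegral.integral_add_adjacent_intervals hi1 hi2).symm
    rw [hsplit]
    have h1 := bound0 ⟨hγ0, hγ2⟩ hC hpos hbnd ht hb0
    have h2 := osc hanti hpos ht hb0 hcase.le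
    have hγt : ((1:ℝ) / t) ^ (-γ) = t ^ γ := by
      rw [one_div, Real.inv_rpow ht.le, ← Real.rpow_neg ht.le, neg_neg]
    have h2' : 3 * (π / t) * ψ (1 / t) ≤ 3 * π * C * t ^ (γ - 1) := by
      have hψ := hbnd (1 / t) hb0
      rw [hγt] at hψ
      calc 3 * (π / t) * ψ (1 / t) ≤ 3 * (π / t) * (C * t ^ γ) := by
            refine mul_le_mul_of_nonneg_left hψ (by positivity)
        _ = 3 * π * C * t ^ (γ - 1) := by
            rw [show γ - 1 = γ + (-1) by ring, Real.rpow_add ht, Real.rpow_neg_one]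
            field_simp
    have h1' : C * t * (1 / t) ^ (2 - γ) / (2 - γ) = C / (2 - γ) * t ^ (γ - 1) := by
      rw [hinv, show C * t * t ^ (γ - 2) = C * (t * t ^ (γ - 2)) by ring, keyt]
      ring
    rw [h1'] at h1
    calc |(∫ y in (0:ℝ)..(1 / t), Real.sin (t * y) * ψ y)
          + ∫ y in (1 / t)..a, Real.sin (t * y) * ψ y|
        ≤ |∫ y in (0:ℝ)..(1 / t), Real.sin (t * y) * ψ y|
          + |∫ y in (1 / t)..a, Real.sin (t * y) * ψ y| := abs_add_le _ _
      _ ≤ C / (2 - γ) * t ^ (γ - 1) + 3 * π * C * t ^ (γ - 1) := by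
          have := h2.trans h2'
          linarith
      _ = C * (1 / (2 - γ) + 3 * π) * t ^ (γ - 1) := by ring
end
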